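/- arXiv:1803.03224 — 5 statements merged into one kernel-verified Lean document; each statement's English description precedes it below -/
import Mathlib

section
/- Let y : [0, ∞) → ℝⁿ solve the linear ODE ẏ(t) = −L y(t) with y(0) = y₀, and set ȳ = (1/n) 1ₙᵀ y₀ and δ(t) = y(t) − ȳ 1ₙ. Then for all t ≥ 0, ‖δ(t)‖₂ ≤ ‖δ(0)‖₂ · exp(−λ₂(L) t). In particular every node value converges to the average consensus value ȳ exponentially with rate λ₂(L). -/
open Matrix Finset

/-- The second-smallest eigenvalue (algebraic connectivity, `λ₂`) of a Hermitian matrix,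
obtained by sorting its eigenvalues in nondecreasing order. -/
noncomputable def lambda2 {n : ℕ} [NeZero n] {L : Matrix (Fin n) (Fin n) ℝ}
    (hL : L.IsHermitian) : ℝ :=
  hL.eigenvalues (Tuple.sort hL.eigenvalues 1)



variable {n : ℕ}

lemma vecMul_eigen {A : Matrix (Fin n) (Fin n) ℝ} (hA : A.IsHermitian) (x : Fin n → ℝ) (j : Fin n) :
    (x ᵥ* (hA.eigenvectorUnitary : Matrix (Fin n) (Fin n) ℝ)) j
      = ⇑(hA.eigenvectorBasis j) ⬝ᵥ x := by
  simp [vecMul, dotProduct, mul_comm]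

lemma star_mulVec_eq {A : Matrix (Fin n) (Fin n) ℝ} (hA : A.IsHermitian) (x : Fin n → ℝ) :
    (star (hA.eigenvectorUnitary : Matrix (Fin n) (Fin n) ℝ)) *ᵥ x
      = x ᵥ* (hA.eigenvectorUnitary : Matrix (Fin n) (Fin n) ℝ) := by
  rw [star_eq_conjTranspose, conjTranspose_eq_transpose_of_trivial, Matrix.mulVec_transpose]

lemma quad_eq {A : Matrix (Fin n) (Fin n) ℝ} (hA : A.IsHermitian) (x : Fin n → ℝ) :
    x ⬝ᵥ (A *ᵥ x) = ∑ j, hA.eigenvalues j * (⇑(hA.eigenvectorBasis j) ⬝ᵥ x) ^ 2 := by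
  have h1 : A *ᵥ x = (hA.eigenvectorUnitary : Matrix (Fin n) (Fin n) ℝ) *ᵥ
      (diagonal hA.eigenvalues *ᵥ ((star (hA.eigenvectorUnitary : Matrix (Fin n) (Fin n) ℝ)) *ᵥ x)) := by
    conv_lhs => rw [hA.spectral_theorem]
    simp [mulVec_mulVec, Matrix.mul_assoc]
  rw [h1, dotProduct_mulVec, star_mulVec_eq, dotProduct]
  refine Finset.sum_congr rfl fun j _ => ?_
  rw [mulVec_diagonal, vecMul_eigen]
  ring

lemma norm_eq {A : Matrix (Fin n) (Fin n) ℝ} (hA : A.IsHermitian) (x : Fin n → ℝ) :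
    x ⬝ᵥ x = ∑ j, (⇑(hA.eigenvectorBasis j) ⬝ᵥ x) ^ 2 := by
  have h1 : x ⬝ᵥ x = x ⬝ᵥ (((hA.eigenvectorUnitary : Matrix (Fin n) (Fin n) ℝ) *
      star (hA.eigenvectorUnitary : Matrix (Fin n) (Fin n) ℝ)) *ᵥ x) := by
    rw [Matrix.mem_unitaryGroup_iff.mp hA.eigenvectorUnitary.2, one_mulVec]
  rw [h1, ← mulVec_mulVec, dotProduct_mulVec, star_mulVec_eq, dotProduct]
  refine Finset.sum_congr rfl fun j _ => ?_
  rw [vecMul_eigen]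
  ring

lemma eigen_const {G : SimpleGraph (Fin n)} [DecidableRel G.Adj] (hconn : G.Connected)
    (v : Fin n → ℝ) (hv : G.lapMatrix ℝ *ᵥ v = 0) (i j : Fin n) : v i = v j := by
  have := (G.lapMatrix_mulVec_eq_zero_iff_forall_reachable (x := v)).mp hv
  exact this i j (hconn.preconnected i j)

lemma key_spectral (hn : 2 ≤ n) [NeZero n] (G : SimpleGraph (Fin n)) [DecidableRel G.Adj]
    (hconn : G.Connected) (x : Fin n → ℝ) (hx : ∑ i, x i = 0) :
    lambda2 (G.posSemidef_lapMatrix ℝ).isHermitian * (x ⬝ᵥ x) ≤ x ⬝ᵥ (G.lapMatrix ℝ *ᵥ x) := by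
  set hA := (G.posSemidef_lapMatrix ℝ).isHermitian with hAdef
  set μ := hA.eigenvalues with hμ
  have hone : G.lapMatrix ℝ *ᵥ (fun _ => (1:ℝ)) = 0 := G.lapMatrix_mulVec_const_eq_zero
  have hnn : ∀ j, 0 ≤ μ j := fun j => (G.posSemidef_lapMatrix ℝ).eigenvalues_nonneg j
  -- existence of a zero eigenvalue
  have hdet : (G.lapMatrix ℝ).det = 0 := by
    rw [← Matrix.exists_mulVec_eq_zero_iff]
    refine ⟨fun _ => 1, ?_, hone⟩
    intro h
    have := congrFun h ⟨0, by omega⟩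
    simpa using this
  have hex : ∃ j, μ j = 0 := by
    have := hA.det_eq_prod_eigenvalues
    rw [hdet] at this
    have h0 : ∏ j, μ j = 0 := by exact_mod_cast this.symm
    obtain ⟨j, _, hj⟩ := Finset.prod_eq_zero_iff.mp h0
    exact ⟨j, hj⟩
  obtain ⟨j0, hj0⟩ := hex
  -- zero eigenvalues: eigenvector is constant, orthogonal to x
  have hzero : ∀ j, μ j = 0 → ⇑(hA.eigenvectorBasis j) ⬝ᵥ x = 0 := by
    intro j hj
    have hv : G.lapMatrix ℝ *ᵥ ⇑(hA.eigenvectorBasis j) = 0 := by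
      have := hA.mulVec_eigenvectorBasis j
      rwa [← hμ, hj, zero_smul] at this
    have hc := eigen_const hconn _ hv
    set i0 : Fin n := ⟨0, by omega⟩
    have : ⇑(hA.eigenvectorBasis j) ⬝ᵥ x = (⇑(hA.eigenvectorBasis j) i0) * ∑ i, x i := by
      rw [dotProduct, Finset.mul_sum]
      exact Finset.sum_congr rfl fun i _ => by rw [hc i i0]
    rw [this, hx, mul_zero]
  -- nonzero eigenvalues are at least lambda2
  have hmin : ∀ j, μ j ≠ 0 → lambda2 hA ≤ μ j := by
    intro j hj
    set τ := Tuple.sort μ with hτ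
    have mono : Monotone (μ ∘ τ) := Tuple.monotone_sort μ
    have hk : j = τ (τ.symm j) := (τ.apply_symm_apply j).symm
    rcases eq_or_ne (τ.symm j) 0 with h0 | h0
    · exfalso
      have h2 : μ (τ 0) ≤ μ (τ (τ.symm j0)) := mono (Fin.zero_le _)
      rw [τ.apply_symm_apply, hj0] at h2
      have h3 : μ j = μ (τ 0) := by rw [← h0, τ.apply_symm_apply]
      exact hj (le_antisymm (h3 ▸ h2) (hnn j))
    · have h1 : (1 : Fin n) ≤ τ.symm j := by
        rw [Fin.le_def]
        have h1v : ((1 : Fin n) : ℕ) = 1 := by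
          have hm : (1:ℕ) % n = 1 := Nat.mod_eq_of_lt (by omega)
          rw [Fin.val_one', hm]
        rw [h1v]
        have : (τ.symm j : ℕ) ≠ 0 := by
          intro h; exact h0 (Fin.ext (by rw [h, Fin.val_zero]))
        omega
      have := mono h1
      simpa [lambda2, Function.comp, ← hk, ← hτ, ← hμ] using this
  -- combine
  rw [quad_eq hA x, norm_eq hA x, Finset.mul_sum]
  refine Finset.sum_le_sum fun j _ => ?_
  rcases eq_or_ne (μ j) 0 with h | h
  · rw [hzero j h]; simp
  · exact mul_le_mul_of_nonneg_right (hmin j h) (sq_nonneg _)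

/-- **Lemma 1.** If `y` solves `ẏ = -L y` on `[0, ∞)` with `y 0 = y₀`, where `L` is the
Laplacian of a connected graph on `n ≥ 2` vertices, then with `ȳ = (1/n) 1ᵀ y₀` the
disagreement `δ(t) = y(t) - ȳ 1` satisfies `‖δ(t)‖₂ ≤ ‖δ(0)‖₂ exp (-λ₂(L) t)`. -/
theorem statement_0 (n : ℕ) (hn : 2 ≤ n) [NeZero n]
    (G : SimpleGraph (Fin n)) [DecidableRel G.Adj] (hconn : G.Connected)
    (y : ℝ → (Fin n → ℝ)) (y₀ : Fin n → ℝ) (hy0 : y 0 = y₀)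
    (hode : ∀ t ∈ Set.Ici (0 : ℝ),
      HasDerivWithinAt y (-(G.lapMatrix ℝ).mulVec (y t)) (Set.Ici (0 : ℝ)) t)
    (ybar : ℝ) (hybar : ybar = (n : ℝ)⁻¹ * ∑ i, y₀ i)
    (δ : ℝ → (Fin n → ℝ)) (hδ : ∀ t, δ t = fun i => y t i - ybar) :
    ∀ t, 0 ≤ t →
      Real.sqrt (∑ i, (δ t i) ^ 2) ≤
        Real.sqrt (∑ i, (δ 0 i) ^ 2) *
          Real.exp (-(lambda2 (G.posSemidef_lapMatrix ℝ).isHermitian) * t) := by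
  intro t ht
  set lam := lambda2 (G.posSemidef_lapMatrix ℝ).isHermitian with hlam
  set L := G.lapMatrix ℝ with hLdef
  -- coordinatewise derivatives
  have hyi : ∀ s ∈ Set.Ici (0:ℝ), ∀ i, HasDerivWithinAt (fun u => y u i)
      ((-(L *ᵥ y s)) i) (Set.Ici (0:ℝ)) s := fun s hs i =>
    (hasDerivWithinAt_pi.1 (hode s hs)) i
  -- row sums of L are zero
  have hrowsum : ∀ z : Fin n → ℝ, ∑ i, (L *ᵥ z) i = 0 := by
    intro z
    have h1 : ∑ i, (L *ᵥ z) i = (fun _ => (1:ℝ)) ⬝ᵥ (L *ᵥ z) := by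
      simp [dotProduct]
    have hsym : Lᵀ = L := G.isSymm_lapMatrix (R := ℝ)
    rw [h1, dotProduct_mulVec, ← hsym, Matrix.vecMul_transpose, hLdef,
      G.lapMatrix_mulVec_const_eq_zero, zero_dotProduct]
  -- the sum of coordinates is conserved
  set S : ℝ → ℝ := fun s => ∑ i, y s i with hSdef
  have hS : ∀ s ∈ Set.Ici (0:ℝ), HasDerivWithinAt S 0 (Set.Ici 0) s := by
    intro s hs
    have h1 := HasDerivWithinAt.fun_sum (fun i (_ : i ∈ Finset.univ) => hyi s hs i)
    have h0 : ∑ i, (-(L *ᵥ y s)) i = 0 := by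
      simp only [Pi.neg_apply, Finset.sum_neg_distrib, hrowsum (y s), neg_zero]
    rwa [h0] at h1
  have hScst : ∀ s, 0 ≤ s → S s = S 0 := by
    intro s hs
    exact constant_of_has_deriv_right_zero
      (fun u hu => ((hS u hu.1).continuousWithinAt).mono Set.Icc_subset_Ici_self)
      (fun u hu => (hS u hu.1).mono (Set.Ici_subset_Ici.2 hu.1)) s ⟨hs, le_refl s⟩
  -- hence the disagreement sums to zero
  have hsum0 : ∀ s, 0 ≤ s → ∑ i, (y s i - ybar) = 0 := by
    intro s hs
    have hn0 : (n:ℝ) ≠ 0 := Nat.cast_ne_zero.2 (by omega)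
    have h1 : ∑ i, (y s i - ybar) = S s - n * ybar := by
      rw [Finset.sum_sub_distrib]
      simp [hSdef, Finset.sum_const, Finset.card_univ, mul_comm]
    have h2 : S 0 = ∑ i, y₀ i := by simp [hSdef, hy0]
    rw [h1, hScst s hs, h2, hybar]
    field_simp
    ring
  -- energy function and its derivative
  set F : ℝ → ℝ := fun s => ∑ i, (y s i - ybar)^2 with hFdef
  set D : ℝ → ℝ := fun s => ∑ i, ((2:ℕ):ℝ) * (y s i - ybar)^(2-1) * ((-(L *ᵥ y s)) i) with hDdef
  have hF : ∀ s ∈ Set.Ici (0:ℝ), HasDerivWithinAt F (D s) (Set.Ici 0) s := by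
    intro s hs
    exact HasDerivWithinAt.fun_sum fun i _ => ((hyi s hs i).sub_const ybar).pow 2
  -- derivative bound via the spectral gap
  have hDle : ∀ s, 0 ≤ s → D s ≤ (-(2*lam)) * F s := by
    intro s hs
    set x : Fin n → ℝ := fun i => y s i - ybar with hxdef
    have hx : ∑ i, x i = 0 := hsum0 s hs
    have hkey := key_spectral hn G hconn x hx
    rw [← hlam, ← hLdef] at hkey
    have hyx : L *ᵥ (y s) = L *ᵥ x := by
      have hysplit : y s = x + fun _ => ybar := by funext i; simp [hxdef]
      rw [hysplit, mulVec_add]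
      have hc : L *ᵥ (fun _ => ybar) = 0 := by
        have h1 : (fun _ : Fin n => ybar) = ybar • (fun _ => (1:ℝ)) := by
          funext i; simp
        rw [h1, mulVec_smul, hLdef, G.lapMatrix_mulVec_const_eq_zero, smul_zero]
      rw [hc, add_zero]
    have hDval : D s = (-2) * (x ⬝ᵥ (L *ᵥ x)) := by
      rw [hDdef, ← hyx]
      simp only [dotProduct, Finset.mul_sum, Pi.neg_apply]
      exact Finset.sum_congr rfl fun i _ => by ring
    have hFval : F s = x ⬝ᵥ x := by
      rw [hFdef, dotProduct]
      exact Finset.sum_congr rfl fun i _ => by ring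
    rw [hDval, hFval]
    nlinarith [hkey]
  -- Lyapunov function is nonincreasing
  set Gf : ℝ → ℝ := fun s => Real.exp (2*lam*s) * F s with hGdef
  have hG : ∀ s ∈ Set.Ici (0:ℝ), HasDerivWithinAt Gf
      (Real.exp (2*lam*s)*(2*lam) * F s + Real.exp (2*lam*s) * D s) (Set.Ici 0) s := by
    intro s hs
    have h1 : HasDerivAt (fun u : ℝ => 2*lam*u) (2*lam) s := by
      simpa using (hasDerivAt_id s).const_mul (2*lam)
    have he : HasDerivAt (fun u => Real.exp (2*lam*u)) (Real.exp (2*lam*s)*(2*lam)) s := h1.exp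
    exact he.hasDerivWithinAt.mul (hF s hs)
  have hmono : AntitoneOn Gf (Set.Ici 0) := by
    apply antitoneOn_of_hasDerivWithinAt_nonpos (convex_Ici 0)
      (f' := fun s => Real.exp (2*lam*s)*(2*lam) * F s + Real.exp (2*lam*s) * D s)
    · exact fun s hs => (hG s hs).continuousWithinAt
    · intro s hs
      rw [interior_Ici] at hs ⊢
      exact (hG s (Set.mem_Ici.2 (le_of_lt hs))).mono Set.Ioi_subset_Ici_self
    · intro s hs
      rw [interior_Ici] at hs
      have h1 : Real.exp (2*lam*s) * D s ≤ Real.exp (2*lam*s) * ((-(2*lam)) * F s) :=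
        mul_le_mul_of_nonneg_left (hDle s (le_of_lt hs)) (Real.exp_pos _).le
      have h2 : Real.exp (2*lam*s)*(2*lam) * F s + Real.exp (2*lam*s) * ((-(2*lam)) * F s) = 0 := by
        ring
      linarith
  have hGle : Real.exp (2*lam*t) * F t ≤ F 0 := by
    have := hmono (Set.self_mem_Ici) (Set.mem_Ici.2 ht) ht
    simpa [hGdef] using this
  have hFt : F t ≤ F 0 * Real.exp (-(2*lam)*t) := by
    have h1 := mul_le_mul_of_nonneg_left hGle (Real.exp_pos (-(2*lam)*t)).le
    have h2 : Real.exp (-(2*lam)*t) * (Real.exp (2*lam*t) * F t) = F t := by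
      rw [← mul_assoc, ← Real.exp_add]
      norm_num
    rw [h2] at h1
    linarith
  -- conclude
  have hF0 : (0:ℝ) ≤ F 0 := Finset.sum_nonneg fun i _ => sq_nonneg _
  have hsq : Real.sqrt (Real.exp (-(2*lam)*t)) = Real.exp (-lam*t) := by
    rw [show (-(2*lam)*t) = (-lam*t) + (-lam*t) by ring, Real.exp_add,
      Real.sqrt_mul_self (Real.exp_pos _).le]
  simp only [hδ]
  calc Real.sqrt (∑ i, (y t i - ybar)^2) ≤ Real.sqrt (F 0 * Real.exp (-(2*lam)*t)) :=
        Real.sqrt_le_sqrt hFt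
    _ = Real.sqrt (F 0) * Real.exp (-lam*t) := by rw [Real.sqrt_mul hF0, hsq]
    _ = Real.sqrt (∑ i, (y 0 i - ybar)^2) * Real.exp (-lam*t) := rfl
end

section
/- The matrix exponential of −L t converges to the averaging matrix: lim_{t→∞} exp(−L t) = (1/n) 1ₙ 1ₙᵀ. -/
open Matrix Finset

section Aux

variable {m : Type*} [Fintype m] [DecidableEq m]

/-- If `A * B = c • B`, then `exp ℝ A * B = exp c • B`. -/
lemma exp_mul_eq_smul_of_mul_eq_smul (A B : Matrix m m ℝ) (c : ℝ)
    (h : A * B = c • B) :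
    NormedSpace.exp A * B = Real.exp c • B := by
  letI : SeminormedRing (Matrix m m ℝ) := Matrix.linftyOpSemiNormedRing
  letI : NormedRing (Matrix m m ℝ) := Matrix.linftyOpNormedRing
  letI : NormedAlgebra ℝ (Matrix m m ℝ) := Matrix.linftyOpNormedAlgebra
  have hpow : ∀ k : ℕ, A ^ k * B = c ^ k • B := by
    intro k
    induction k with
    | zero => simp
    | succ k ih =>
        rw [pow_succ', mul_assoc, ih, Matrix.mul_smul, h, smul_smul, ← pow_succ]
  have hs : Summable (fun k : ℕ => ((Nat.factorial k : ℝ))⁻¹ • A ^ k) :=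
    NormedSpace.expSeries_summable' (𝕂 := ℝ) A
  have hsc : Summable (fun k : ℕ => ((Nat.factorial k : ℝ))⁻¹ * c ^ k) := by
    simpa [div_eq_inv_mul] using Real.summable_pow_div_factorial c
  calc NormedSpace.exp A * B
      = (∑' k : ℕ, ((Nat.factorial k : ℝ))⁻¹ • A ^ k) * B := by
        rw [NormedSpace.exp_eq_tsum (𝕂 := ℝ)]
    _ = ∑' k : ℕ, (((Nat.factorial k : ℝ))⁻¹ • A ^ k) * B := (hs.tsum_mul_right B).symm
    _ = ∑' k : ℕ, (((Nat.factorial k : ℝ))⁻¹ * c ^ k) • B := by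
        congr 1; funext k
        rw [Matrix.smul_mul, hpow k, smul_smul]
    _ = (∑' k : ℕ, ((Nat.factorial k : ℝ))⁻¹ * c ^ k) • B := hsc.tsum_smul_const B
    _ = Real.exp c • B := by
        congr 1
        rw [Real.exp_eq_exp_ℝ, NormedSpace.exp_eq_tsum (𝕂 := ℝ)]
        simp [smul_eq_mul]

/-- For a positive definite symmetric real matrix `M`, `exp (-t • M) → 0` as `t → ∞`. -/
lemma tendsto_exp_neg_smul_posDef (M : Matrix m m ℝ) (hM : M.PosDef) :
    Filter.Tendsto (fun t : ℝ => NormedSpace.exp ((-t) • M))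
      Filter.atTop (nhds 0) := by
  have hH : M.IsHermitian := hM.isHermitian
  set μ : m → ℝ := hH.eigenvalues with hμ
  set U : Matrix m m ℝ := (hH.eigenvectorUnitary : Matrix m m ℝ) with hU
  have hUU : U * star U = 1 := (Matrix.mem_unitaryGroup_iff).mp hH.eigenvectorUnitary.2
  have hUU' : star U * U = 1 := (Matrix.mem_unitaryGroup_iff').mp hH.eigenvectorUnitary.2
  set u : (Matrix m m ℝ)ˣ := ⟨U, star U, hUU, hUU'⟩ with hu
  have hspec := hH.spectral_theorem
  have hrep : ∀ t : ℝ, NormedSpace.exp ((-t) • M)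
      = U * Matrix.diagonal (fun i => Real.exp ((-t) * μ i)) * star U := by
    intro t
    have h1 : (-t) • M = (u : Matrix m m ℝ) * Matrix.diagonal (fun i => (-t) * μ i) * ((u⁻¹ : (Matrix m m ℝ)ˣ) : Matrix m m ℝ) := by
      calc (-t) • M = (-t) • (U * Matrix.diagonal (RCLike.ofReal ∘ μ) * star U) := by
            rw [hspec, Unitary.conjStarAlgAut_apply]
        _ = U * ((-t) • Matrix.diagonal (RCLike.ofReal ∘ μ)) * star U := by
            rw [Matrix.mul_smul, Matrix.smul_mul]
        _ = (u : Matrix m m ℝ) * Matrix.diagonal (fun i => (-t) * μ i) * ((u⁻¹ : (Matrix m m ℝ)ˣ) : Matrix m m ℝ) := by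
            congr 1
            · congr 1
              ext i j
              by_cases hij : i = j <;>
                simp [Matrix.diagonal_apply, hij, Function.comp]
    rw [h1, Matrix.exp_units_conj u, Matrix.exp_diagonal]
    congr 1
    · congr 1
      congr 1
      rw [Pi.exp_def]
      funext i
      rw [← Real.exp_eq_exp_ℝ]
  simp only [hrep]
  have hdiag : Filter.Tendsto
      (fun t : ℝ => Matrix.diagonal (fun i => Real.exp ((-t) * μ i)))
      Filter.atTop (nhds 0) := by
    have hcont : Continuous (fun v : m → ℝ => Matrix.diagonal v) :=
      continuous_id.matrix_diagonal
    have h0 : Filter.Tendsto (fun t : ℝ => (fun i => Real.exp ((-t) * μ i)))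
        Filter.atTop (nhds 0) := by
      rw [tendsto_pi_nhds]
      intro i
      have hpos : 0 < μ i := hM.eigenvalues_pos i
      have hbot : Filter.Tendsto (fun t : ℝ => (-t) * μ i) Filter.atTop Filter.atBot := by
        have h1 : Filter.Tendsto (fun t : ℝ => t * μ i) Filter.atTop Filter.atTop :=
          Filter.Tendsto.atTop_mul_const hpos Filter.tendsto_id
        have h2 := Filter.tendsto_neg_atTop_atBot.comp h1
        simpa [Function.comp_def, neg_mul] using h2
      have h3 := Real.tendsto_exp_atBot.comp hbot
      simpa [Function.comp_def] using h3
    have h4 := (hcont.tendsto 0).comp h0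
    have h00 : Matrix.diagonal (0 : m → ℝ) = 0 := by
      ext i j; simp [Matrix.diagonal_apply]
    rw [h00] at h4
    simpa [Function.comp_def] using h4
  have := (hdiag.const_mul U).mul_const (star U)
  simpa using this

end Aux

/-- **Limit of the consensus semigroup.** For the Laplacian `L` of a connected graph on
`n ≥ 2` vertices, the matrix exponential `exp (-L t)` converges, as `t → ∞`, to the
averaging matrix `(1/n) 1ₙ 1ₙᵀ`. -/
theorem statement_2 (n : ℕ) (hn : 2 ≤ n)
    (G : SimpleGraph (Fin n)) [DecidableRel G.Adj] (hconn : G.Connected) :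
    Filter.Tendsto (fun t : ℝ => NormedSpace.exp (-(t • G.lapMatrix ℝ)))
      Filter.atTop
      (nhds ((n : ℝ)⁻¹ • Matrix.of (fun _ _ : Fin n => (1 : ℝ)))) := by
  have hn0 : (n : ℝ) ≠ 0 := by positivity
  set L : Matrix (Fin n) (Fin n) ℝ := G.lapMatrix ℝ with hLdef
  set J : Matrix (Fin n) (Fin n) ℝ := Matrix.of (fun _ _ : Fin n => (1 : ℝ)) with hJdef
  have hrow : ∀ i, ∑ k, L i k = 0 := by
    intro i
    have := congrFun (G.lapMatrix_mulVec_const_eq_zero (R := ℝ)) i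
    simpa [Matrix.mulVec, dotProduct] using this
  have hLJ : L * J = 0 := by
    ext i j
    simp [Matrix.mul_apply, hJdef, hrow i]
  have hJL : J * L = 0 := by
    have hsymm : Lᵀ = L := G.isSymm_lapMatrix (R := ℝ)
    have hJt : Jᵀ = J := by ext i j; simp [hJdef]
    calc J * L = (Lᵀ * Jᵀ)ᵀ := by rw [← Matrix.transpose_mul, Matrix.transpose_transpose]
      _ = (L * J)ᵀ := by rw [hsymm, hJt]
      _ = 0 := by rw [hLJ]; simp
  have hJJ : J * J = (n : ℝ) • J := by
    ext i j
    simp [Matrix.mul_apply, hJdef]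
  -- the positive definite matrix M = L + J
  set M : Matrix (Fin n) (Fin n) ℝ := L + J with hMdef
  have hMpd : M.PosDef := by
    refine Matrix.PosDef.of_dotProduct_mulVec_pos ?_ ?_
    · have hsymm : Lᵀ = L := G.isSymm_lapMatrix (R := ℝ)
      have hJt : Jᵀ = J := by ext i j; simp [hJdef]
      show Mᴴ = M
      simp only [hMdef, Matrix.conjTranspose_add]
      rw [Matrix.conjTranspose_eq_transpose_of_trivial,
        Matrix.conjTranspose_eq_transpose_of_trivial, hsymm, hJt]
    · intro x hx
      have hL_nonneg : 0 ≤ x ⬝ᵥ (L *ᵥ x) := by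
        have := (posSemidef_iff_dotProduct_mulVec.mp (G.posSemidef_lapMatrix ℝ)).2 x
        simpa using this
      have hJ_eq : x ⬝ᵥ (J *ᵥ x) = (∑ i, x i) * (∑ i, x i) := by
        simp [dotProduct, Matrix.mulVec, hJdef, Finset.sum_mul, mul_comm]
      have hsplit : star x ⬝ᵥ (M *ᵥ x) = x ⬝ᵥ (L *ᵥ x) + x ⬝ᵥ (J *ᵥ x) := by
        simp [hMdef, Matrix.add_mulVec, dotProduct_add]
      rw [hsplit]
      rcases lt_or_eq_of_le hL_nonneg with hpos | hzero
      · have : 0 ≤ x ⬝ᵥ (J *ᵥ x) := by rw [hJ_eq]; exact mul_self_nonneg _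
        linarith
      · -- x is constant on the connected graph
        have hquad : Matrix.toLinearMap₂' ℝ (G.lapMatrix ℝ) x x = 0 := by
          rw [Matrix.toLinearMap₂'_apply']
          exact hzero.symm
        have hconst : ∀ i j : Fin n, x i = x j := by
          intro i j
          exact (G.lapMatrix_toLinearMap₂'_apply'_eq_zero_iff_forall_reachable x).mp
            hquad i j (hconn.preconnected i j)
        have h0 : Fin n := ⟨0, by omega⟩
        have hxall : ∀ i, x i = x h0 := fun i => hconst i h0
        have hx0 : x h0 ≠ 0 := by
          intro h
          apply hx
          funext i
          rw [hxall i, h]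
          simp
        have hsum : ∑ i, x i = n * x h0 := by
          rw [Finset.sum_congr rfl (fun i _ => hxall i)]
          simp [mul_comm]
        have : 0 < x ⬝ᵥ (J *ᵥ x) := by
          rw [hJ_eq, hsum]
          have hne : (n : ℝ) * x h0 ≠ 0 := mul_ne_zero hn0 hx0
          exact mul_self_pos.mpr hne
        linarith
  -- commutation
  have hcommLJ : Commute L J := by
    unfold Commute SemiconjBy
    rw [hLJ, hJL]
  -- key algebraic identity
  have key : ∀ t : ℝ, NormedSpace.exp (-(t • L))
      = (n : ℝ)⁻¹ • J + NormedSpace.exp ((-t) • M) * (1 - (n : ℝ)⁻¹ • J) := by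
    intro t
    have e1 : NormedSpace.exp (-(t • L)) * ((n : ℝ)⁻¹ • J) = (n : ℝ)⁻¹ • J := by
      have h : (-(t • L)) * ((n : ℝ)⁻¹ • J) = (0 : ℝ) • ((n : ℝ)⁻¹ • J) := by
        rw [Matrix.mul_smul, Matrix.neg_mul, Matrix.smul_mul, hLJ]
        simp
      simpa [Real.exp_zero] using exp_mul_eq_smul_of_mul_eq_smul _ _ _ h
    have e3 : NormedSpace.exp ((-t) • J) * (1 - (n : ℝ)⁻¹ • J) = 1 - (n : ℝ)⁻¹ • J := by
      have hJQ : J * (1 - (n : ℝ)⁻¹ • J) = 0 := by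
        rw [Matrix.mul_sub, Matrix.mul_smul, hJJ, mul_one]
        rw [smul_smul, inv_mul_cancel₀ hn0, one_smul, sub_self]
      have h : ((-t) • J) * (1 - (n : ℝ)⁻¹ • J) = (0 : ℝ) • (1 - (n : ℝ)⁻¹ • J) := by
        rw [Matrix.smul_mul, hJQ]
        simp
      simpa [Real.exp_zero] using exp_mul_eq_smul_of_mul_eq_smul _ _ _ h
    have e2 : NormedSpace.exp ((-t) • M)
        = NormedSpace.exp (-(t • L)) * NormedSpace.exp ((-t) • J) := by
      have hsum : (-t) • M = (-(t • L)) + ((-t) • J) := by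
        rw [hMdef, smul_add, neg_smul]
      have hcomm : Commute (-(t • L)) ((-t) • J) := by
        have := (hcommLJ.smul_left t).smul_right (-t)
        exact this.neg_left
      rw [hsum]
      exact Matrix.exp_add_of_commute _ _ hcomm
    have e4 : NormedSpace.exp ((-t) • M) * (1 - (n : ℝ)⁻¹ • J)
        = NormedSpace.exp (-(t • L)) * (1 - (n : ℝ)⁻¹ • J) := by
      rw [e2, mul_assoc, e3]
    rw [e4, mul_sub, mul_one, e1]
    ring_nf
    abel
  simp only [key]
  have hfinal := (tendsto_exp_neg_smul_posDef M hMpd).mul_const (1 - (n : ℝ)⁻¹ • J)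
  have := hfinal.const_add ((n : ℝ)⁻¹ • J)
  simpa using this
end

section
/- Let c > 0, t₀ ∈ ℝ, and let V : [t₀, ∞) → ℝ be differentiable with V(t) ≥ 0 for all t ≥ t₀ and V′(t) ≤ −c √(V(t)) for all t ≥ t₀ with V(t) > 0. Then V(t) = 0 for all t ≥ t₀ + 2√(V(t₀))/c; moreover √(V(t)) ≤ √(V(t₀)) − (c/2)(t − t₀) for all t in [t₀, t₀ + 2√(V(t₀))/c]. -/
open Real Set

/-- **Finite-time comparison lemma.** Let `c > 0` and let `V : [t₀, ∞) → ℝ` be differentiable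
with `V ≥ 0` and `V' ≤ -c √V` whenever `V > 0`. Then `√(V t) ≤ √(V t₀) - (c/2) (t - t₀)` on
`[t₀, t₀ + 2√(V t₀)/c]`, and `V t = 0` for all `t ≥ t₀ + 2√(V t₀)/c`. -/
theorem statement_11 (c : ℝ) (hc : 0 < c) (t₀ : ℝ)
    (V V' : ℝ → ℝ)
    (hnonneg : ∀ t, t₀ ≤ t → 0 ≤ V t)
    (hderiv : ∀ t, t₀ ≤ t → HasDerivAt V (V' t) t)
    (hineq : ∀ t, t₀ ≤ t → 0 < V t → V' t ≤ -c * Real.sqrt (V t)) :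
    (∀ t, t₀ + 2 * Real.sqrt (V t₀) / c ≤ t → V t = 0) ∧
    (∀ t, t₀ ≤ t → t ≤ t₀ + 2 * Real.sqrt (V t₀) / c →
      Real.sqrt (V t) ≤ Real.sqrt (V t₀) - c / 2 * (t - t₀)) := by
  have hcont : ContinuousOn V (Ici t₀) := fun x hx =>
    ((hderiv x hx).continuousAt).continuousWithinAt
  have hanti : AntitoneOn V (Ici t₀) := by
    apply antitoneOn_of_deriv_nonpos (convex_Ici t₀) hcont
    · intro x hx
      rw [interior_Ici] at hx
      exact ((hderiv x (le_of_lt hx)).differentiableAt).differentiableWithinAt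
    · intro x hx
      rw [interior_Ici] at hx
      rw [(hderiv x hx.le).deriv]
      rcases (hnonneg x hx.le).eq_or_lt with h0 | hpos
      · have hmin : IsLocalMin V x := by
          filter_upwards [Ici_mem_nhds hx] with y hy
          rw [← h0]; exact hnonneg y hy
        rw [hmin.hasDerivAt_eq_zero (hderiv x hx.le)]
      · have h1 := hineq x hx.le hpos
        have h2 := Real.sqrt_nonneg (V x)
        nlinarith
  have key : ∀ t, t₀ ≤ t → t ≤ t₀ + 2 * Real.sqrt (V t₀) / c →
      Real.sqrt (V t) ≤ Real.sqrt (V t₀) - c / 2 * (t - t₀) := by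
    intro t ht hT'
    have hg0 : 0 ≤ Real.sqrt (V t₀) - c / 2 * (t - t₀) := by
      have h1 : t - t₀ ≤ 2 * Real.sqrt (V t₀) / c := by linarith
      have h2 : c / 2 * (t - t₀) ≤ c / 2 * (2 * Real.sqrt (V t₀) / c) :=
        mul_le_mul_of_nonneg_left h1 (by linarith)
      have heq : c / 2 * (2 * Real.sqrt (V t₀) / c) = Real.sqrt (V t₀) := by
        field_simp
      linarith
    by_cases hz : ∃ s ∈ Icc t₀ t, V s = 0
    · obtain ⟨s, hs, hVs⟩ := hz
      have hle : V t ≤ V s := hanti hs.1 ht hs.2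
      have hVt : V t = 0 := le_antisymm (by rwa [hVs] at hle) (hnonneg t ht)
      rw [hVt, Real.sqrt_zero]; exact hg0
    · push_neg at hz
      have hpos : ∀ s ∈ Icc t₀ t, 0 < V s := fun s hs =>
        ((hnonneg s hs.1).lt_of_ne fun h => hz s hs h.symm)
      rcases eq_or_lt_of_le ht with rfl | hlt
      · simp
      · have hcont' : ContinuousOn (fun x => Real.sqrt (V x)) (Icc t₀ t) :=
          Real.continuous_sqrt.comp_continuousOn (hcont.mono Icc_subset_Ici_self)
        have hder : ∀ x ∈ Ioo t₀ t, HasDerivAt (fun y => Real.sqrt (V y))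
            (V' x / (2 * Real.sqrt (V x))) x := by
          intro x hx
          have hVx : V x ≠ 0 := (hpos x ⟨hx.1.le, hx.2.le⟩).ne'
          have h := (Real.hasDerivAt_sqrt hVx).comp x (hderiv x hx.1.le)
          simpa [div_eq_mul_inv, mul_comm, Function.comp_def] using h
        obtain ⟨ξ, hξ, hslope⟩ := exists_hasDerivAt_eq_slope
          (fun y => Real.sqrt (V y)) _ hlt hcont' hder
        have hξp : 0 < V ξ := hpos ξ ⟨hξ.1.le, hξ.2.le⟩
        have hsξ : 0 < Real.sqrt (V ξ) := Real.sqrt_pos.mpr hξp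
        have hbound : V' ξ / (2 * Real.sqrt (V ξ)) ≤ -(c / 2) := by
          rw [div_le_iff₀ (by positivity)]
          have h1 := hineq ξ hξ.1.le hξp
          nlinarith
        rw [hslope] at hbound
        rw [div_le_iff₀ (by linarith : (0:ℝ) < t - t₀)] at hbound
        nlinarith
  refine ⟨fun t ht => ?_, key⟩
  have hT0 : t₀ ≤ t₀ + 2 * Real.sqrt (V t₀) / c := by
    have h : 0 ≤ 2 * Real.sqrt (V t₀) / c := by positivity
    linarith
  set T := t₀ + 2 * Real.sqrt (V t₀) / c with hTdef
  have hVT : V T = 0 := by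
    have h1 := key T hT0 le_rfl
    have h2 : c / 2 * (T - t₀) = Real.sqrt (V t₀) := by
      rw [hTdef]; field_simp; ring
    rw [h2] at h1
    have h3 := Real.sqrt_nonneg (V T)
    have h4 : Real.sqrt (V T) = 0 := le_antisymm (by linarith) h3
    have h5 := hnonneg T hT0
    nlinarith [Real.sq_sqrt h5]
  have hle : V t ≤ V T := hanti hT0 (hT0.trans ht) ht
  exact le_antisymm (hVT ▸ hle) (hnonneg t (hT0.trans ht))
end

section
/- Under the hypotheses of Theorem 1 (φ differentiable with sup_{t≥t₀} ‖φ̇(t)‖∞ ≤ φ̇_max, β ≥ (n √n / λ₂(L)) φ̇_max + 1, z differentiable with ż(t) = −β sgn{(Bᵀ ⊗ I_r) x(t)}, x(t) = (B ⊗ I_r) z(t) + φ(t), x̃(t) = x(t) − 1ₙ ⊗ φ̄(t)), the Lyapunov function V(t) = (1/2) ‖x̃(t)‖₂² satisfies the differential inequality V̇(t) ≤ −‖(Bᵀ ⊗ I_r) x̃(t)‖₁ ≤ −√(2 λ₂(L)) · √(V(t)) for all t ≥ t₀. -/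
open Matrix Finset
open scoped Kronecker
open scoped RealInnerProductSpace

/-- The incidence matrix of a simple graph in which every undirected edge is regarded as two
oppositely oriented directed edges (darts): entry `(i, d)` is `1` if dart `d` enters vertex
`i`, `-1` if `d` leaves `i`, and `0` otherwise. -/
def dartIncMatrix {n : ℕ} (G : SimpleGraph (Fin n)) [DecidableRel G.Adj] :
    Matrix (Fin n) G.Dart ℝ :=
  Matrix.of fun i d => if d.toProd.2 = i then 1 else if d.toProd.1 = i then -1 else 0

lemma spectral_aux {n : ℕ} [NeZero n] (hn : 2 ≤ n) (G : SimpleGraph (Fin n))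
    [DecidableRel G.Adj] (hconn : G.Connected) :
    0 < lambda2 (G.posSemidef_lapMatrix ℝ).isHermitian ∧
    lambda2 (G.posSemidef_lapMatrix ℝ).isHermitian ≤ 2 * n ∧
    ∀ v : Fin n → ℝ, (∑ i, v i) = 0 →
      lambda2 (G.posSemidef_lapMatrix ℝ).isHermitian * (∑ i, v i ^ 2) ≤
        v ⬝ᵥ (G.lapMatrix ℝ) *ᵥ v := by
  classical
  set L : Matrix (Fin n) (Fin n) ℝ := G.lapMatrix ℝ with hLdef
  set hL := (G.posSemidef_lapMatrix ℝ).isHermitian with hhL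
  set u := hL.eigenvectorBasis with hu
  set μ := hL.eigenvalues with hμ
  set σ := Tuple.sort μ with hσ
  have hmono : Monotone (μ ∘ σ) := Tuple.monotone_sort μ
  have hnn : ∀ j, 0 ≤ μ j := (G.posSemidef_lapMatrix ℝ).eigenvalues_nonneg
  have hinner : ∀ (a : EuclideanSpace ℝ (Fin n)) (b : EuclideanSpace ℝ (Fin n)),
      ⟪a, b⟫ = ∑ i, a i * b i := by
    intro a b; simp [PiLp.inner_apply, RCLike.inner_apply]
    exact Finset.sum_congr rfl fun i _ => mul_comm _ _
  have hquad : ∀ w : Fin n → ℝ, w ⬝ᵥ L *ᵥ w =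
      (∑ i, ∑ j, if G.Adj i j then (w i - w j)^2 else 0) / 2 := by
    intro w
    rw [← SimpleGraph.lapMatrix_toLinearMap₂' ℝ w (G := G), Matrix.toLinearMap₂'_apply']
  have hnorm1 : ∀ j, ∑ i, u j i * u j i = 1 := by
    intro j
    have := u.orthonormal.1 j
    have h2 : ⟪u j, u j⟫ = 1 := by
      rw [real_inner_self_eq_norm_sq, this]; norm_num
    rw [← hinner _ _, h2]
  -- eigenvalue 0 eigenvectors are constant
  have hconst : ∀ j, μ j = 0 → ∀ a b, u j a = u j b := by
    intro j hj a b
    have hmv : L *ᵥ (u j : Fin n → ℝ) = 0 := by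
      have h := hL.mulVec_eigenvectorBasis j
      have hj' : hL.eigenvalues j = (0 : ℝ) := hj
      rw [hj', zero_smul] at h
      exact h
    have h0 : Matrix.toLinearMap₂' ℝ L (u j) (u j) = 0 := by
      rw [Matrix.toLinearMap₂'_apply', hmv, dotProduct_zero]
    rw [hLdef] at h0
    exact (SimpleGraph.lapMatrix_toLinearMap₂'_apply'_eq_zero_iff_forall_reachable
      G (u j)).mp h0 a b (hconn.preconnected a b)
  -- eigenvalue upper bound 2n
  have hub : ∀ j, μ j ≤ 2 * n := by
    intro j
    have hmv2 : ∀ i, (L *ᵥ (u j : Fin n → ℝ)) i = μ j * u j i := by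
      intro i
      exact congrFun (hL.mulVec_eigenvectorBasis j) i
    have hμj : μ j = u j ⬝ᵥ L *ᵥ (u j : Fin n → ℝ) := by
      calc μ j = μ j * ∑ i, u j i * u j i := by rw [hnorm1, mul_one]
        _ = ∑ i, u j i * (L *ᵥ (u j : Fin n → ℝ)) i := by
            rw [Finset.mul_sum]
            exact Finset.sum_congr rfl fun i _ => by rw [hmv2 i]; ring
        _ = u j ⬝ᵥ L *ᵥ (u j : Fin n → ℝ) := rfl
    rw [hμj, hquad]
    have hb : ∀ i k : Fin n, (if G.Adj i k then (u j i - u j k)^2 else 0) ≤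
        2 * (u j i * u j i) + 2 * (u j k * u j k) := by
      intro i k
      split_ifs
      · nlinarith [sq_nonneg (u j i + u j k)]
      · nlinarith [mul_self_nonneg (u j i), mul_self_nonneg (u j k)]
    calc (∑ i, ∑ k, if G.Adj i k then (u j i - u j k)^2 else 0) / 2
        ≤ (∑ i : Fin n, ∑ k : Fin n, (2 * (u j i * u j i) + 2 * (u j k * u j k))) / 2 := by
          gcongr with i _ k _
          exact hb i k
      _ = 2 * n := by
          have h5 : ∀ i, ∑ k : Fin n, (2 * (u j i * u j i) + 2 * (u j k * u j k))
              = 2 * (n : ℝ) * (u j i * u j i) + 2 := by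
            intro i
            rw [Finset.sum_add_distrib, Finset.sum_const, Finset.card_univ, Fintype.card_fin,
              nsmul_eq_mul, ← Finset.mul_sum, hnorm1]
            ring
          have h4 : ∑ i : Fin n, ∑ k : Fin n, (2 * (u j i * u j i) + 2 * (u j k * u j k))
              = 4 * n := by
            calc ∑ i : Fin n, ∑ k : Fin n, (2 * (u j i * u j i) + 2 * (u j k * u j k))
                = ∑ i : Fin n, (2 * (n : ℝ) * (u j i * u j i) + 2) := Finset.sum_congr rfl
                    fun i _ => h5 i
              _ = 2 * (n : ℝ) * (∑ i, u j i * u j i) + 2 * n := by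
                  rw [Finset.sum_add_distrib, Finset.sum_const, Finset.card_univ,
                    Fintype.card_fin, nsmul_eq_mul, ← Finset.mul_sum]
                  ring
              _ = 4 * n := by rw [hnorm1]; ring
          rw [h4]; ring
  -- zero is an eigenvalue
  have hzero : ∃ j, μ j = 0 := by
    have hdet : L.det = 0 := by
      rw [← Matrix.exists_mulVec_eq_zero_iff]
      refine ⟨fun _ => 1, ?_, SimpleGraph.lapMatrix_mulVec_const_eq_zero G⟩
      intro h
      have := congrFun h ⟨0, by omega⟩
      simp at this
    have hprod : ∏ j, μ j = 0 := by
      have := hL.det_eq_prod_eigenvalues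
      rw [hdet] at this
      exact_mod_cast this.symm
    obtain ⟨j, _, hj⟩ := Finset.prod_eq_zero_iff.mp hprod
    exact ⟨j, hj⟩
  have hσ0 : μ (σ 0) = 0 := by
    obtain ⟨j, hj⟩ := hzero
    refine le_antisymm ?_ (hnn _)
    have : μ (σ 0) ≤ μ (σ (σ.symm j)) := hmono (Fin.zero_le _)
    rwa [Equiv.apply_symm_apply, hj] at this
  have hne01 : (0 : Fin n) ≠ (1 : Fin n) := by
    intro h
    have := congrArg Fin.val h
    simp [Fin.val_one', Nat.mod_eq_of_lt hn] at this
  -- λ₂ > 0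
  have hlpos : 0 < lambda2 hL := by
    rcases (hnn (σ 1)).lt_or_eq with h | h
    · exact h
    · exfalso
      have hσ1 : μ (σ 1) = 0 := h.symm
      have hc0 := hconst _ hσ0
      have hc1 := hconst _ hσ1
      have hneσ : σ 0 ≠ σ 1 := fun h => hne01 (σ.injective h)
      have horth : ⟪u (σ 0), u (σ 1)⟫ = 0 := u.orthonormal.2 hneσ
      rw [hinner] at horth
      set i0 : Fin n := ⟨0, by omega⟩
      have : ∑ i, u (σ 0) i * u (σ 1) i = n * (u (σ 0) i0 * u (σ 1) i0) := by
        rw [Finset.sum_congr rfl fun i _ => by rw [hc0 i i0, hc1 i i0]]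
        simp [mul_comm]
      rw [this] at horth
      have hn0 : (n : ℝ) ≠ 0 := Nat.cast_ne_zero.mpr (NeZero.ne n)
      have := mul_eq_zero.mp horth
      rcases this with h' | h'
      · exact hn0 h'
      rcases mul_eq_zero.mp h' with h'' | h''
      · have := hnorm1 (σ 0)
        rw [Finset.sum_congr rfl fun i _ => by rw [hc0 i i0, h'']] at this
        simp at this
      · have := hnorm1 (σ 1)
        rw [Finset.sum_congr rfl fun i _ => by rw [hc1 i i0, h'']] at this
        simp at this
  refine ⟨hlpos, hub (σ 1), ?_⟩
  -- main quadratic form bound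
  intro v hsum
  set c : Fin n → ℝ := fun j => ∑ i, u j i * v i with hc
  have hrepr : ∀ k, ⟪u k, (WithLp.toLp 2 v : EuclideanSpace ℝ (Fin n))⟫ = c k := fun k => hinner _ _
  have hfun : ∀ i, v i = ∑ k, c k * u k i := by
    intro i
    have h4 := congrFun (congrArg (fun (w : EuclideanSpace ℝ (Fin n)) => (w : Fin n → ℝ))
      (u.sum_repr' (WithLp.toLp 2 v : EuclideanSpace ℝ (Fin n)))) i
    simp only at h4
    rw [← h4]
    rw [show ((∑ k, (⟪u k, (WithLp.toLp 2 v : EuclideanSpace ℝ (Fin n))⟫ • u k : EuclideanSpace ℝ (Fin n))) i)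
        = ∑ k, ⟪u k, (WithLp.toLp 2 v : EuclideanSpace ℝ (Fin n))⟫ * u k i from
      by simp]
    exact Finset.sum_congr rfl fun k _ => by rw [hrepr]
  have hcdef : ∀ k, ∑ i, u k i * v i = c k := fun k => rfl
  have hczero : ∀ j, μ j = 0 → c j = 0 := by
    intro j hj
    have i0 : Fin n := ⟨0, by omega⟩
    show (∑ i, u j i * v i) = 0
    rw [Finset.sum_congr rfl fun i _ => by rw [hconst j hj i i0]]
    rw [← Finset.mul_sum, hsum, mul_zero]
  have E1 : ∑ i, v i ^ 2 = ∑ j, c j ^ 2 := by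
    have h1 : ∀ i, v i ^ 2 = ∑ k, c k * (u k i * v i) := by
      intro i
      calc v i ^ 2 = (∑ k, c k * u k i) * v i := by rw [← hfun i]; ring
        _ = ∑ k, c k * (u k i * v i) := by
            rw [Finset.sum_mul]
            exact Finset.sum_congr rfl fun k _ => by ring
    calc ∑ i, v i ^ 2 = ∑ i, ∑ k, c k * (u k i * v i) := Finset.sum_congr rfl fun i _ => h1 i
      _ = ∑ k, ∑ i, c k * (u k i * v i) := Finset.sum_comm
      _ = ∑ k, c k ^ 2 := by
          refine Finset.sum_congr rfl fun k _ => ?_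
          rw [← Finset.mul_sum, hcdef k, sq]
  have hmv : ∀ i, (L *ᵥ v) i = ∑ k, c k * (μ k * u k i) := by
    intro i
    calc (L *ᵥ v) i = ∑ m, L i m * v m := rfl
      _ = ∑ m, ∑ k, L i m * (c k * u k m) := by
          refine Finset.sum_congr rfl fun m _ => ?_
          rw [hfun m, Finset.mul_sum]
      _ = ∑ k, ∑ m, L i m * (c k * u k m) := Finset.sum_comm
      _ = ∑ k, c k * ∑ m, L i m * u k m := by
          refine Finset.sum_congr rfl fun k _ => ?_
          rw [Finset.mul_sum]
          exact Finset.sum_congr rfl fun m _ => by ring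
      _ = ∑ k, c k * (μ k * u k i) := by
          refine Finset.sum_congr rfl fun k _ => ?_
          congr 1
          exact congrFun (hL.mulVec_eigenvectorBasis k) i
  have E2 : v ⬝ᵥ L *ᵥ v = ∑ j, μ j * c j ^ 2 := by
    have h1 : ∀ i, v i * (L *ᵥ v) i = ∑ k, μ k * c k * (u k i * v i) := by
      intro i
      rw [hmv i, Finset.mul_sum]
      exact Finset.sum_congr rfl fun k _ => by ring
    calc v ⬝ᵥ L *ᵥ v = ∑ i, ∑ k, μ k * c k * (u k i * v i) :=
          Finset.sum_congr rfl fun i _ => h1 i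
      _ = ∑ k, ∑ i, μ k * c k * (u k i * v i) := Finset.sum_comm
      _ = ∑ j, μ j * c j ^ 2 := by
          refine Finset.sum_congr rfl fun k _ => ?_
          rw [← Finset.mul_sum, hcdef k, sq]; ring
  rw [E1, E2, Finset.mul_sum]
  refine Finset.sum_le_sum fun j _ => ?_
  rcases eq_or_ne (μ j) 0 with h | h
  · rw [hczero j h, h]; simp
  · have hle : lambda2 hL ≤ μ j := by
      have hj' : j = σ (σ.symm j) := (Equiv.apply_symm_apply σ j).symm
      rcases eq_or_ne (σ.symm j) 0 with h0 | h0
      · exfalso; apply h; rw [hj', h0, hσ0]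
      · have h1 : (1 : Fin n) ≤ σ.symm j := by
          rw [Fin.le_def]
          have hne : (σ.symm j : ℕ) ≠ 0 := fun hcc => h0 (Fin.ext (by simpa using hcc))
          have : ((1 : Fin n) : ℕ) = 1 := by
            simp [Fin.val_one', Nat.mod_eq_of_lt hn]
          omega
        have h2 := hmono h1
        simp only [Function.comp_apply] at h2
        rw [← hj'] at h2
        exact h2
    have := sq_nonneg (c j)
    nlinarith

lemma real_sign_mul_self (y : ℝ) : Real.sign y * y = |y| := by
  rcases lt_trichotomy y 0 with h | h | h
  · rw [Real.sign_of_neg h, abs_of_neg h]; ring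
  · simp [h]
  · rw [Real.sign_of_pos h, abs_of_pos h]; ring

lemma kron_id_mulVec {α β : Type*} [Fintype α] [Fintype β] {r : ℕ}
    (M : Matrix α β ℝ) (v : β × Fin r → ℝ) (i : α) (k : Fin r) :
    ((M ⊗ₖ (1 : Matrix (Fin r) (Fin r) ℝ)) *ᵥ v) (i, k) = ∑ j, M i j * v (j, k) := by
  show ∑ q : β × Fin r, (M ⊗ₖ (1 : Matrix (Fin r) (Fin r) ℝ)) (i, k) q * v q = _
  rw [Fintype.sum_prod_type]
  refine Finset.sum_congr rfl fun j _ => ?_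
  rw [Finset.sum_eq_single k]
  · simp [Matrix.one_apply]
  · intro l _ hl
    simp [Matrix.one_apply, hl.symm]
  · simp

lemma dartInc_col_mul {n : ℕ} (G : SimpleGraph (Fin n)) [DecidableRel G.Adj]
    (d : G.Dart) (v : Fin n → ℝ) :
    ∑ i, dartIncMatrix G i d * v i = v d.toProd.2 - v d.toProd.1 := by
  classical
  have hne : d.toProd.1 ≠ d.toProd.2 := d.adj.ne
  have h : ∀ i, dartIncMatrix G i d * v i
      = (if d.toProd.2 = i then v i else 0) + (if d.toProd.1 = i then -v i else 0) := by
    intro i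
    show (if d.toProd.2 = i then (1:ℝ) else if d.toProd.1 = i then -1 else 0) * v i = _
    by_cases h2 : d.toProd.2 = i
    · have h1 : d.toProd.1 ≠ i := fun h1 => hne (h1.trans h2.symm)
      simp [h2, h1]
    · by_cases h1 : d.toProd.1 = i <;> simp [h2, h1]
  rw [Finset.sum_congr rfl fun i _ => h i, Finset.sum_add_distrib,
    Finset.sum_ite_eq, Finset.sum_ite_eq]
  simp
  ring

lemma dartInc_col_sum {n : ℕ} (G : SimpleGraph (Fin n)) [DecidableRel G.Adj] (d : G.Dart) :
    ∑ i, dartIncMatrix G i d = 0 := by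
  have := dartInc_col_mul G d (fun _ => (1:ℝ))
  simpa using this

lemma dart_sum {n : ℕ} (G : SimpleGraph (Fin n)) [DecidableRel G.Adj] (f : Fin n → Fin n → ℝ) :
    ∑ d : G.Dart, f d.toProd.1 d.toProd.2 = ∑ i, ∑ j, if G.Adj i j then f i j else 0 := by
  classical
  have h1 : ∑ i, ∑ j, (if G.Adj i j then f i j else 0)
      = ∑ p : Fin n × Fin n, if G.Adj p.1 p.2 then f p.1 p.2 else 0 := by
    rw [Fintype.sum_prod_type]
  rw [h1, ← Finset.sum_filter]
  refine Finset.sum_bij' (fun d _ => d.toProd)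
    (fun p hp => SimpleGraph.Dart.mk p (by simpa using (Finset.mem_filter.mp hp).2))
    (fun d _ => by simp [d.adj]) (fun p _ => Finset.mem_univ _)
    (fun d _ => rfl) (fun p hp => rfl) (fun d _ => rfl)

lemma lap_quad {n : ℕ} [DecidableEq (Fin n)] (G : SimpleGraph (Fin n)) [DecidableRel G.Adj]
    (w : Fin n → ℝ) :
    w ⬝ᵥ (G.lapMatrix ℝ) *ᵥ w = (∑ i, ∑ j, if G.Adj i j then (w i - w j)^2 else 0) / 2 := by
  rw [← SimpleGraph.lapMatrix_toLinearMap₂' ℝ w (G := G), Matrix.toLinearMap₂'_apply']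

lemma dart_quad {n : ℕ} (G : SimpleGraph (Fin n)) [DecidableRel G.Adj] (w : Fin n → ℝ) :
    ∑ d : G.Dart, (w d.toProd.2 - w d.toProd.1)^2 = 2 * (w ⬝ᵥ (G.lapMatrix ℝ) *ᵥ w) := by
  classical
  rw [lap_quad G w, dart_sum G (fun a b => (w b - w a)^2)]
  have : ∀ i j : Fin n, (if G.Adj i j then (w j - w i)^2 else 0)
      = (if G.Adj i j then (w i - w j)^2 else 0) := by
    intro i j; split_ifs <;> ring
  rw [Finset.sum_congr rfl fun i _ => Finset.sum_congr rfl fun j _ => this i j]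
  ring

set_option maxHeartbeats 2000000 in
/-- **Lyapunov differential inequality for Theorem 1.** Under the hypotheses of Theorem 1,
the Lyapunov function `V(t) = (1/2) ‖x̃(t)‖₂²` is differentiable on `[t₀, ∞)` and its
derivative satisfies `V̇(t) ≤ -‖(Bᵀ ⊗ I_r) x̃(t)‖₁ ≤ -√(2 λ₂(L)) √(V(t))`. -/
theorem statement_13 (n : ℕ) (hn : 2 ≤ n) [NeZero n]
    (G : SimpleGraph (Fin n)) [DecidableRel G.Adj] (hconn : G.Connected)
    (r : ℕ) (hr : 1 ≤ r) (t₀ : ℝ)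
    (φ φ' : ℝ → (Fin n × Fin r → ℝ))
    (hφ : ∀ t, t₀ ≤ t → HasDerivAt φ (φ' t) t)
    (φdotmax : ℝ) (hφmax : ∀ t, t₀ ≤ t → ∀ p, |φ' t p| ≤ φdotmax)
    (β : ℝ)
    (hβ : (n : ℝ) * Real.sqrt n / lambda2 (G.posSemidef_lapMatrix ℝ).isHermitian * φdotmax + 1
            ≤ β)
    (z : ℝ → (G.Dart × Fin r → ℝ))
    (x : ℝ → (Fin n × Fin r → ℝ))
    (hx : ∀ t, x t = (dartIncMatrix G ⊗ₖ (1 : Matrix (Fin r) (Fin r) ℝ)).mulVec (z t) + φ t)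
    (hz : ∀ t, t₀ ≤ t → HasDerivAt z
      (fun e => -β * Real.sign
        ((((dartIncMatrix G)ᵀ ⊗ₖ (1 : Matrix (Fin r) (Fin r) ℝ)).mulVec (x t)) e)) t)
    (φbar : ℝ → (Fin r → ℝ)) (hφbar : ∀ t k, φbar t k = (n : ℝ)⁻¹ * ∑ i, φ t (i, k))
    (xt : ℝ → (Fin n × Fin r → ℝ)) (hxt : ∀ t p, xt t p = x t p - φbar t p.2)
    (V : ℝ → ℝ) (hV : ∀ t, V t = (1 / 2 : ℝ) * ∑ p, (xt t p) ^ 2) :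
    ∀ t, t₀ ≤ t → ∃ V' : ℝ,
      HasDerivAt V V' t ∧
      V' ≤ -(∑ e, |(((dartIncMatrix G)ᵀ ⊗ₖ (1 : Matrix (Fin r) (Fin r) ℝ)).mulVec (xt t)) e|) ∧
      -(∑ e, |(((dartIncMatrix G)ᵀ ⊗ₖ (1 : Matrix (Fin r) (Fin r) ℝ)).mulVec (xt t)) e|) ≤
        -(Real.sqrt (2 * lambda2 (G.posSemidef_lapMatrix ℝ).isHermitian) *
          Real.sqrt (V t)) := by
  classical
  obtain ⟨hlpos, hlub, hspec⟩ := spectral_aux hn G hconn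
  set lam := lambda2 (G.posSemidef_lapMatrix ℝ).isHermitian with hlamdef
  intro t ht
  have hz' := hasDerivAt_pi.mp (hz t ht)
  have hφ' := hasDerivAt_pi.mp (hφ t ht)
  set B := dartIncMatrix G with hBdef
  set W : G.Dart × Fin r → ℝ :=
    (Bᵀ ⊗ₖ (1 : Matrix (Fin r) (Fin r) ℝ)) *ᵥ (x t) with hWdef
  have hxtc : ∀ s (p : Fin n × Fin r), xt s p = (∑ e : G.Dart, B p.1 e * z s (e, p.2)) + φ s p
      - (n:ℝ)⁻¹ * ∑ i, φ s (i, p.2) := by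
    intro s p
    obtain ⟨i, k⟩ := p
    rw [hxt s (i,k), hx s, hφbar s k]
    show ((B ⊗ₖ (1 : Matrix (Fin r) (Fin r) ℝ)) *ᵥ z s) (i,k) + φ s (i,k) - _ = _
    rw [kron_id_mulVec]
  set u : Fin n × Fin r → ℝ := xt t with hudef
  set d : Fin n × Fin r → ℝ := fun p =>
    (∑ e : G.Dart, B p.1 e * (-β * Real.sign (W (e, p.2))))
    + φ' t p - (n:ℝ)⁻¹ * ∑ i, φ' t (i, p.2) with hddef
  have hdp : ∀ p, d p = (∑ e : G.Dart, B p.1 e * (-β * Real.sign (W (e, p.2))))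
    + φ' t p - (n:ℝ)⁻¹ * ∑ i, φ' t (i, p.2) := fun p => rfl
  set S : ℝ := ∑ e : G.Dart × Fin r, |((Bᵀ ⊗ₖ (1 : Matrix (Fin r) (Fin r) ℝ)) *ᵥ u) e|
    with hSdef
  -- basic component formulas
  have hWt : ∀ (e : G.Dart) (k : Fin r), ((Bᵀ ⊗ₖ (1 : Matrix (Fin r) (Fin r) ℝ)) *ᵥ u) (e, k)
      = u (e.toProd.2, k) - u (e.toProd.1, k) := by
    intro e k
    rw [kron_id_mulVec]
    rw [Finset.sum_congr rfl fun j (_ : j ∈ Finset.univ) =>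
      (by rw [Matrix.transpose_apply] : Bᵀ e j * u (j, k) = B j e * u (j, k))]
    exact dartInc_col_mul G e (fun i => u (i, k))
  have hWW : ∀ (e : G.Dart) (k : Fin r),
      ((Bᵀ ⊗ₖ (1 : Matrix (Fin r) (Fin r) ℝ)) *ᵥ u) (e, k) = W (e, k) := by
    intro e k
    rw [hWdef, kron_id_mulVec, kron_id_mulVec]
    have h1 : ∀ j, Bᵀ e j * u (j, k) = Bᵀ e j * x t (j, k) - φbar t k * B j e := by
      intro j
      rw [hudef, hxt t (j, k), Matrix.transpose_apply]
      ring
    rw [Finset.sum_congr rfl fun j _ => h1 j, Finset.sum_sub_distrib,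
      ← Finset.mul_sum, dartInc_col_sum, mul_zero, sub_zero]
  have hsum0 : ∀ k, ∑ i, u (i, k) = 0 := by
    intro k
    have h1 : ∀ i : Fin n, u (i, k) = ((∑ e : G.Dart, B i e * z t (e, k)) + φ t (i, k))
        - (n:ℝ)⁻¹ * ∑ i', φ t (i', k) := by
      intro i
      rw [hudef, hxtc t (i, k)]
    rw [Finset.sum_congr rfl fun i _ => h1 i, Finset.sum_sub_distrib, Finset.sum_add_distrib]
    have h2 : ∑ i : Fin n, ∑ e : G.Dart, B i e * z t (e, k) = 0 := by
      rw [Finset.sum_comm]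
      refine Finset.sum_eq_zero fun e _ => ?_
      rw [← Finset.sum_mul, dartInc_col_sum, zero_mul]
    have h3 : ∑ _i : Fin n, ((n:ℝ)⁻¹ * ∑ i', φ t (i', k)) = ∑ i', φ t (i', k) := by
      rw [Finset.sum_const, Finset.card_univ, Fintype.card_fin, nsmul_eq_mul]
      rw [← mul_assoc, mul_inv_cancel₀ (Nat.cast_ne_zero.mpr (NeZero.ne n)), one_mul]
    rw [h2, h3, zero_add, sub_self]
  have hS0 : 0 ≤ S := Finset.sum_nonneg fun e _ => abs_nonneg _
  set P : Fin r → ℝ := fun k => ∑ i, u (i, k) ^ 2 with hPdef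
  have hPk : ∀ k, P k = ∑ i, u (i, k) ^ 2 := fun k => rfl
  have hP0 : ∀ k, 0 ≤ P k := fun k => Finset.sum_nonneg fun i _ => sq_nonneg _
  set Sk : Fin r → ℝ :=
    fun k => ∑ e : G.Dart, |((Bᵀ ⊗ₖ (1 : Matrix (Fin r) (Fin r) ℝ)) *ᵥ u) (e, k)| with hSkdef
  have hSkk : ∀ k, Sk k = ∑ e : G.Dart,
      |((Bᵀ ⊗ₖ (1 : Matrix (Fin r) (Fin r) ℝ)) *ᵥ u) (e, k)| := fun k => rfl
  have hSk0 : ∀ k, 0 ≤ Sk k := fun k => Finset.sum_nonneg fun e _ => abs_nonneg _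
  have hSsum : S = ∑ k, Sk k := by
    rw [hSdef, Fintype.sum_prod_type, Finset.sum_comm]
  have h2lam : (0:ℝ) < 2 * lam := by linarith
  have hkey : ∀ k, 2 * lam * P k ≤ Sk k ^ 2 := by
    intro k
    have h1 : lam * P k ≤ (fun i => u (i, k)) ⬝ᵥ (G.lapMatrix ℝ) *ᵥ (fun i => u (i, k)) :=
      hspec _ (hsum0 k)
    have h2 := dart_quad G (fun i => u (i, k))
    have h3 : ∑ e : G.Dart, (u (e.toProd.2, k) - u (e.toProd.1, k)) ^ 2 ≤ Sk k ^ 2 := by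
      have h4 := Finset.sum_sq_le_sq_sum_of_nonneg (s := Finset.univ)
        (f := fun e : G.Dart => |((Bᵀ ⊗ₖ (1 : Matrix (Fin r) (Fin r) ℝ)) *ᵥ u) (e, k)|)
        (fun e _ => abs_nonneg _)
      rw [← hSkk k] at h4
      calc ∑ e : G.Dart, (u (e.toProd.2, k) - u (e.toProd.1, k)) ^ 2
          = ∑ e : G.Dart, |((Bᵀ ⊗ₖ (1 : Matrix (Fin r) (Fin r) ℝ)) *ᵥ u) (e, k)| ^ 2 := by
            refine Finset.sum_congr rfl fun e _ => ?_
            rw [sq_abs, hWt e k]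
        _ ≤ Sk k ^ 2 := h4
    rw [hPk k]
    calc 2 * lam * ∑ i, u (i, k) ^ 2
        ≤ 2 * ((fun i => u (i, k)) ⬝ᵥ (G.lapMatrix ℝ) *ᵥ (fun i => u (i, k))) := by
          rw [hPk k] at h1; linarith
      _ = ∑ e : G.Dart, (u (e.toProd.2, k) - u (e.toProd.1, k)) ^ 2 := h2.symm
      _ ≤ Sk k ^ 2 := h3
  refine ⟨∑ p, u p * d p, ?_, ?_, ?_⟩
  · have hVfun : V = fun s => (1/2 : ℝ) * ∑ p : Fin n × Fin r,
        ((∑ e : G.Dart, B p.1 e * z s (e, p.2)) + φ s p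
          - (n:ℝ)⁻¹ * ∑ i, φ s (i, p.2)) ^ 2 := by
      funext s
      rw [hV s]
      exact congrArg _ (Finset.sum_congr rfl fun p _ => by rw [hxtc s p])
    rw [hVfun]
    have hcomp : ∀ p : Fin n × Fin r, HasDerivAt (fun s =>
        (∑ e : G.Dart, B p.1 e * z s (e, p.2)) + φ s p
          - (n:ℝ)⁻¹ * ∑ i, φ s (i, p.2)) (d p) t := by
      intro p
      have h1 : HasDerivAt (fun s => ∑ e : G.Dart, B p.1 e * z s (e, p.2))
          (∑ e : G.Dart, B p.1 e * (-β * Real.sign (W (e, p.2)))) t :=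
        HasDerivAt.fun_sum fun e _ => (hz' (e, p.2)).const_mul _
      have h2 := hφ' p
      have h3 : HasDerivAt (fun s => (n:ℝ)⁻¹ * ∑ i, φ s (i, p.2))
          ((n:ℝ)⁻¹ * ∑ i, φ' t (i, p.2)) t :=
        (HasDerivAt.fun_sum fun i _ => hφ' (i, p.2)).const_mul _
      rw [hdp p]
      exact (h1.add h2).sub h3
    have hder := (HasDerivAt.fun_sum
      (fun p (_ : p ∈ Finset.univ) => (hcomp p).pow 2)).const_mul (1/2:ℝ)
    refine HasDerivAt.congr_deriv hder ?_
    rw [Finset.mul_sum]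
    refine Finset.sum_congr rfl fun p _ => ?_
    rw [← hxtc t p, ← hudef]
    push_cast
    ring

  · show ∑ p, u p * d p ≤ -S
    have hφm0 : 0 ≤ φdotmax :=
      le_trans (abs_nonneg _) (hφmax t ht (⟨0, by omega⟩, ⟨0, by omega⟩))
    have hsplit : ∑ p, u p * d p
        = (∑ p : Fin n × Fin r, u p * (∑ e : G.Dart, B p.1 e * (-β * Real.sign (W (e, p.2)))))
          + (∑ p : Fin n × Fin r, u p * φ' t p)
          - (∑ p : Fin n × Fin r, u p * ((n:ℝ)⁻¹ * ∑ i, φ' t (i, p.2))) := by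
      rw [← Finset.sum_add_distrib, ← Finset.sum_sub_distrib]
      refine Finset.sum_congr rfl fun p _ => ?_
      rw [hdp p]; ring
    have hT1 : (∑ p : Fin n × Fin r, u p * (∑ e : G.Dart, B p.1 e
          * (-β * Real.sign (W (e, p.2))))) = -β * S := by
      calc ∑ p : Fin n × Fin r, u p * (∑ e : G.Dart, B p.1 e * (-β * Real.sign (W (e, p.2))))
          = ∑ i, ∑ k, ∑ e : G.Dart, (-β * Real.sign (W (e, k))) * (B i e * u (i, k)) := by
            rw [Fintype.sum_prod_type]
            refine Finset.sum_congr rfl fun i _ => Finset.sum_congr rfl fun k _ => ?_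
            rw [Finset.mul_sum]
            exact Finset.sum_congr rfl fun e _ => by ring
        _ = ∑ i, ∑ e : G.Dart, ∑ k, (-β * Real.sign (W (e, k))) * (B i e * u (i, k)) :=
            Finset.sum_congr rfl fun i _ => Finset.sum_comm
        _ = ∑ e : G.Dart, ∑ i, ∑ k, (-β * Real.sign (W (e, k))) * (B i e * u (i, k)) :=
            Finset.sum_comm
        _ = ∑ e : G.Dart, ∑ k, ∑ i, (-β * Real.sign (W (e, k))) * (B i e * u (i, k)) :=
            Finset.sum_congr rfl fun e _ => Finset.sum_comm
        _ = ∑ e : G.Dart, ∑ k, -β * |((Bᵀ ⊗ₖ (1 : Matrix (Fin r) (Fin r) ℝ)) *ᵥ u) (e, k)| := by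
            refine Finset.sum_congr rfl fun e _ => Finset.sum_congr rfl fun k _ => ?_
            rw [← Finset.mul_sum]
            have hsum : ∑ i, B i e * u (i, k)
                = ((Bᵀ ⊗ₖ (1 : Matrix (Fin r) (Fin r) ℝ)) *ᵥ u) (e, k) := by
              rw [kron_id_mulVec]
              exact Finset.sum_congr rfl fun j _ => by rw [Matrix.transpose_apply]
            rw [hsum, hWW e k]
            rw [show -β * Real.sign (W (e, k)) * W (e, k)
                = -β * (Real.sign (W (e, k)) * W (e, k)) from by ring,
              real_sign_mul_self, ← hWW e k]
        _ = -β * S := by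
            rw [hSdef, Fintype.sum_prod_type, Finset.mul_sum]
            exact Finset.sum_congr rfl fun e _ => by rw [Finset.mul_sum]
    have hT3 : ∑ p : Fin n × Fin r, u p * ((n:ℝ)⁻¹ * ∑ i, φ' t (i, p.2)) = 0 := by
      rw [Fintype.sum_prod_type, Finset.sum_comm]
      refine Finset.sum_eq_zero fun k _ => ?_
      show ∑ i : Fin n, u (i, k) * ((n:ℝ)⁻¹ * ∑ i', φ' t (i', k)) = 0
      rw [← Finset.sum_mul, hsum0 k, zero_mul]
    set c0 : ℝ := φdotmax * Real.sqrt ((n:ℝ) / (2 * lam)) with hc0def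
    have hTk : ∀ k, ∑ i, u (i, k) * φ' t (i, k) ≤ c0 * Sk k := by
      intro k
      have ha : ∑ i, u (i, k) * φ' t (i, k) ≤ φdotmax * ∑ i, |u (i, k)| := by
        calc ∑ i, u (i, k) * φ' t (i, k) ≤ ∑ i, |u (i, k)| * φdotmax := by
              refine Finset.sum_le_sum fun i _ => ?_
              calc u (i, k) * φ' t (i, k) ≤ |u (i, k) * φ' t (i, k)| := le_abs_self _
                _ = |u (i, k)| * |φ' t (i, k)| := abs_mul _ _
                _ ≤ |u (i, k)| * φdotmax :=
                    mul_le_mul_of_nonneg_left (hφmax t ht _) (abs_nonneg _)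
          _ = φdotmax * ∑ i, |u (i, k)| := by rw [← Finset.sum_mul]; ring
      have hb : (∑ i, |u (i, k)|) ^ 2 ≤ (n:ℝ) * P k := by
        have h5 := sq_sum_le_card_mul_sum_sq (s := Finset.univ)
          (f := fun i : Fin n => |u (i, k)|)
        simp only [sq_abs, Finset.card_univ, Fintype.card_fin] at h5
        rw [hPk k]
        exact_mod_cast h5
      have hc : ∑ i, |u (i, k)| ≤ Real.sqrt ((n:ℝ) * P k) := by
        have h0 : (0:ℝ) ≤ ∑ i, |u (i, k)| := Finset.sum_nonneg fun i _ => abs_nonneg _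
        have := Real.sqrt_le_sqrt hb
        rwa [Real.sqrt_sq h0] at this
      have hd2 : Real.sqrt ((n:ℝ) * P k) ≤ Real.sqrt ((n:ℝ) / (2 * lam)) * Sk k := by
        have hle : (n:ℝ) * P k ≤ (n:ℝ) / (2 * lam) * Sk k ^ 2 := by
          have hk := hkey k
          have hn0 : (0:ℝ) ≤ (n:ℝ) := Nat.cast_nonneg n
          rw [div_mul_eq_mul_div, le_div_iff₀ h2lam]
          nlinarith [hP0 k]
        calc Real.sqrt ((n:ℝ) * P k) ≤ Real.sqrt ((n:ℝ) / (2 * lam) * Sk k ^ 2) :=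
              Real.sqrt_le_sqrt hle
          _ = Real.sqrt ((n:ℝ) / (2 * lam)) * Sk k := by
              rw [Real.sqrt_mul (by positivity) (Sk k ^ 2), Real.sqrt_sq (hSk0 k)]
      calc ∑ i, u (i, k) * φ' t (i, k) ≤ φdotmax * ∑ i, |u (i, k)| := ha
        _ ≤ φdotmax * (Real.sqrt ((n:ℝ) / (2 * lam)) * Sk k) :=
            mul_le_mul_of_nonneg_left (le_trans hc hd2) hφm0
        _ = c0 * Sk k := by rw [hc0def]; ring
    have hc0le : c0 ≤ β - 1 := by
      have hn2 : (2:ℝ) ≤ (n:ℝ) := by exact_mod_cast hn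
      have hsq : Real.sqrt ((n:ℝ) / (2 * lam)) ≤ (n:ℝ) * Real.sqrt n / lam := by
        have hn0 : (0:ℝ) < (n:ℝ) := by linarith
        have hrhs : Real.sqrt ((n:ℝ)^3 / lam^2) = (n:ℝ) * Real.sqrt n / lam := by
          rw [show (n:ℝ)^3 = (n:ℝ)^2 * n from by ring, Real.sqrt_div (by positivity),
            Real.sqrt_mul (sq_nonneg _), Real.sqrt_sq hn0.le,
            show lam^2 = lam*lam from sq lam ▸ rfl, Real.sqrt_mul_self hlpos.le]
        have hcore : (n:ℝ)/(2*lam) ≤ (n:ℝ)^3/lam^2 := by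
          rw [div_le_div_iff₀ h2lam (by positivity)]
          have e1 : lam * lam ≤ 2*(n:ℝ)*lam := mul_le_mul_of_nonneg_right hlub hlpos.le
          have e2 := mul_le_mul_of_nonneg_left e1 hn0.le
          have e3 : 0 ≤ ((n:ℝ) - 1) * (n:ℝ)^2 * (2 * lam) :=
            mul_nonneg (mul_nonneg (by linarith) (by positivity)) (by linarith)
          nlinarith [e1, e2, e3, hn0, hlpos]
        calc Real.sqrt ((n:ℝ)/(2*lam)) ≤ Real.sqrt ((n:ℝ)^3/lam^2) := Real.sqrt_le_sqrt hcore
          _ = (n:ℝ) * Real.sqrt n / lam := hrhs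
      rw [hc0def]
      calc φdotmax * Real.sqrt ((n:ℝ) / (2 * lam))
          ≤ φdotmax * ((n:ℝ) * Real.sqrt n / lam) := mul_le_mul_of_nonneg_left hsq hφm0
        _ = (n:ℝ) * Real.sqrt n / lam * φdotmax := by ring
        _ ≤ β - 1 := by rw [hlamdef]; linarith [hβ]
    have hT2 : ∑ p : Fin n × Fin r, u p * φ' t p ≤ (β - 1) * S := by
      rw [Fintype.sum_prod_type, Finset.sum_comm, hSsum, Finset.mul_sum]
      refine Finset.sum_le_sum fun k _ => le_trans (hTk k) ?_
      exact mul_le_mul_of_nonneg_right hc0le (hSk0 k)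
    rw [hsplit, hT1, hT3]
    have hx1 : (β - 1) * S = β * S - S := by ring
    linarith [hT2]
  · show -S ≤ -(Real.sqrt (2 * lam) * Real.sqrt (V t))
    have hSP : ∀ k, Real.sqrt (2*lam) * Real.sqrt (P k) ≤ Sk k := by
      intro k
      have h1 : Real.sqrt (2*lam*P k) ≤ Sk k := by
        have hk := hkey k
        calc Real.sqrt (2*lam*P k) ≤ Real.sqrt (Sk k^2) := Real.sqrt_le_sqrt (by linarith)
          _ = Sk k := Real.sqrt_sq (hSk0 k)
      calc Real.sqrt (2*lam) * Real.sqrt (P k) = Real.sqrt (2*lam*P k) :=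
            (Real.sqrt_mul (by linarith) _).symm
        _ ≤ Sk k := h1
    have hsqsum : Real.sqrt (∑ k, P k) ≤ ∑ k, Real.sqrt (P k) := by
      have h2 : ∑ k, P k ≤ (∑ k, Real.sqrt (P k))^2 := by
        have h3 := Finset.sum_sq_le_sq_sum_of_nonneg (s := Finset.univ)
          (f := fun k : Fin r => Real.sqrt (P k)) (fun k _ => Real.sqrt_nonneg _)
        calc ∑ k, P k = ∑ k, Real.sqrt (P k)^2 :=
              Finset.sum_congr rfl fun k _ => (Real.sq_sqrt (hP0 k)).symm
          _ ≤ _ := h3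
      have h4 := Real.sqrt_le_sqrt h2
      rwa [Real.sqrt_sq (Finset.sum_nonneg fun k _ => Real.sqrt_nonneg _)] at h4
    have hVP : V t = (1/2) * ∑ k, P k := by
      rw [hV t, ← hudef]
      congr 1
      rw [Fintype.sum_prod_type, Finset.sum_comm]
    have hVle : Real.sqrt (V t) ≤ Real.sqrt (∑ k, P k) := by
      apply Real.sqrt_le_sqrt
      rw [hVP]
      have h5 := Finset.sum_nonneg (fun k (_ : k ∈ Finset.univ) => hP0 k)
      linarith
    have hfin : Real.sqrt (2*lam) * Real.sqrt (V t) ≤ S := by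
      calc Real.sqrt (2*lam) * Real.sqrt (V t)
          ≤ Real.sqrt (2*lam) * ∑ k, Real.sqrt (P k) :=
            mul_le_mul_of_nonneg_left (le_trans hVle hsqsum) (Real.sqrt_nonneg _)
        _ = ∑ k, Real.sqrt (2*lam) * Real.sqrt (P k) := Finset.mul_sum _ _ _
        _ ≤ ∑ k, Sk k := Finset.sum_le_sum fun k _ => hSP k
        _ = S := hSsum.symm
    linarith [hfin]
end

section
/- Let r ≥ 1, γ > 0, let g : [t₀, ∞) → ℝ^r be continuous, and let Θ : [t₀, ∞) → ℝ^{nr} be differentiable and satisfy Θ̇(t) = −γ (L ⊗ I_r) Θ(t) + 1ₙ ⊗ g(t) (i.e., all agents receive the identical input g). Let M = Iₙ − (1/n) 1ₙ 1ₙᵀ. Then the disagreement δ(t) = (M ⊗ I_r) Θ(t) satisfies ‖δ(t)‖₂ ≤ ‖δ(t₀)‖₂ · exp(−γ λ₂(L) (t − t₀)) for all t ≥ t₀; that is, a common input does not affect the exponential decay of the disagreement among the agents. -/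
open Matrix Finset
open scoped Kronecker RealInnerProductSpace

section spec
variable {n : ℕ} [NeZero n] (G : SimpleGraph (Fin n)) [DecidableRel G.Adj]

omit [NeZero n] in
lemma lap_symm_dot (x z : Fin n → ℝ) :
    x ⬝ᵥ (G.lapMatrix ℝ *ᵥ z) = (G.lapMatrix ℝ *ᵥ x) ⬝ᵥ z := by
  rw [Matrix.dotProduct_mulVec, ← Matrix.mulVec_transpose, (G.isSymm_lapMatrix (R := ℝ)).eq]

lemma lap_dot_basis (i : Fin n) (z : Fin n → ℝ) :
    (⇑((G.posSemidef_lapMatrix ℝ).isHermitian.eigenvectorBasis i)) ⬝ᵥ (G.lapMatrix ℝ *ᵥ z)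
      = (G.posSemidef_lapMatrix ℝ).isHermitian.eigenvalues i *
        ((⇑((G.posSemidef_lapMatrix ℝ).isHermitian.eigenvectorBasis i)) ⬝ᵥ z) := by
  rw [lap_symm_dot, (G.posSemidef_lapMatrix ℝ).isHermitian.mulVec_eigenvectorBasis,
    smul_dotProduct]
  simp

lemma euc_inner_eq (x y : EuclideanSpace ℝ (Fin n)) :
    ⟪x, y⟫ = (WithLp.equiv 2 (Fin n → ℝ) x) ⬝ᵥ (WithLp.equiv 2 (Fin n → ℝ) y) := by
  simp [PiLp.inner_apply, dotProduct, RCLike.inner_apply, mul_comm]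

lemma weq_id (z : Fin n → ℝ) :
    WithLp.equiv 2 (Fin n → ℝ) (WithLp.toLp 2 z : EuclideanSpace ℝ (Fin n)) = z := rfl

set_option linter.unusedSectionVars false

set_option maxHeartbeats 1000000 in
lemma lambda2_le_quad (hconn : G.Connected) (y : Fin n → ℝ) (hy : ∑ i, y i = 0) :
    lambda2 (G.posSemidef_lapMatrix ℝ).isHermitian * (∑ i, y i ^ 2)
      ≤ y ⬝ᵥ (G.lapMatrix ℝ *ᵥ y) := by
  have hL := (G.posSemidef_lapMatrix ℝ).isHermitian
  -- expansion of quadratic form and Parseval for arbitrary z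
  have hquad : ∀ z : Fin n → ℝ,
      z ⬝ᵥ (G.lapMatrix ℝ *ᵥ z) = ∑ i, (G.posSemidef_lapMatrix ℝ).isHermitian.eigenvalues i *
        ((⇑((G.posSemidef_lapMatrix ℝ).isHermitian.eigenvectorBasis i) ⬝ᵥ z) *
         (⇑((G.posSemidef_lapMatrix ℝ).isHermitian.eigenvectorBasis i) ⬝ᵥ z)) := by
    intro z
    have h := (G.posSemidef_lapMatrix ℝ).isHermitian.eigenvectorBasis.sum_inner_mul_inner
      (WithLp.toLp 2 z : EuclideanSpace ℝ (Fin n))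
      (WithLp.toLp 2 (G.lapMatrix ℝ *ᵥ z : Fin n → ℝ) : EuclideanSpace ℝ (Fin n))
    simp only [euc_inner_eq] at h
    rw [weq_id z, weq_id (G.lapMatrix ℝ *ᵥ z)] at h
    simp only [WithLp.equiv_apply] at h
    rw [← h]
    refine Finset.sum_congr rfl fun i _ => ?_
    rw [lap_dot_basis, dotProduct_comm z]
    ring
  have hpar : ∀ z : Fin n → ℝ,
      z ⬝ᵥ z = ∑ i, (⇑((G.posSemidef_lapMatrix ℝ).isHermitian.eigenvectorBasis i) ⬝ᵥ z) *
        (⇑((G.posSemidef_lapMatrix ℝ).isHermitian.eigenvectorBasis i) ⬝ᵥ z) := by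
    intro z
    have h := (G.posSemidef_lapMatrix ℝ).isHermitian.eigenvectorBasis.sum_inner_mul_inner
      (WithLp.toLp 2 z : EuclideanSpace ℝ (Fin n)) (WithLp.toLp 2 z : EuclideanSpace ℝ (Fin n))
    simp only [euc_inner_eq] at h
    rw [weq_id z] at h
    simp only [WithLp.equiv_apply] at h
    rw [← h]
    refine Finset.sum_congr rfl fun i _ => ?_
    rw [dotProduct_comm z]
  -- existence of a zero eigenvalue
  have hex : ∃ k, (G.posSemidef_lapMatrix ℝ).isHermitian.eigenvalues k = 0 := by
    by_contra h
    push_neg at h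
    have hc : ∀ i, ⇑((G.posSemidef_lapMatrix ℝ).isHermitian.eigenvectorBasis i)
        ⬝ᵥ (fun _ : Fin n => (1:ℝ)) = 0 := by
      intro i
      have h2 := lap_dot_basis G i (fun _ => (1:ℝ))
      rw [G.lapMatrix_mulVec_const_eq_zero] at h2
      simp only [dotProduct_zero] at h2
      rcases mul_eq_zero.mp h2.symm with h3 | h3
      · exact absurd h3 (h i)
      · exact h3
    have hp := hpar (fun _ : Fin n => (1:ℝ))
    simp only [hc, mul_zero, Finset.sum_const_zero] at hp
    have : (n : ℝ) = 0 := by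
      simpa [dotProduct] using hp
    exact (Nat.cast_ne_zero.mpr (NeZero.ne n)) this
  -- minimal index
  have hmin : ∀ i, (G.posSemidef_lapMatrix ℝ).isHermitian.eigenvalues
      (Tuple.sort (G.posSemidef_lapMatrix ℝ).isHermitian.eigenvalues 0)
      ≤ (G.posSemidef_lapMatrix ℝ).isHermitian.eigenvalues i := by
    intro i
    have h := Tuple.monotone_sort (G.posSemidef_lapMatrix ℝ).isHermitian.eigenvalues
      (Fin.zero_le ((Tuple.sort (G.posSemidef_lapMatrix ℝ).isHermitian.eigenvalues).symm i))
    simpa using h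
  have hμ0 : (G.posSemidef_lapMatrix ℝ).isHermitian.eigenvalues
      (Tuple.sort (G.posSemidef_lapMatrix ℝ).isHermitian.eigenvalues 0) = 0 := by
    obtain ⟨k, hk⟩ := hex
    have h1 := hmin k
    rw [hk] at h1
    have h2 := (G.posSemidef_lapMatrix ℝ).eigenvalues_nonneg
      (Tuple.sort (G.posSemidef_lapMatrix ℝ).isHermitian.eigenvalues 0)
    linarith
  -- eigenvector of i0 is constant
  have hLb0 : G.lapMatrix ℝ *ᵥ ⇑((G.posSemidef_lapMatrix ℝ).isHermitian.eigenvectorBasis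
      (Tuple.sort (G.posSemidef_lapMatrix ℝ).isHermitian.eigenvalues 0)) = 0 := by
    rw [(G.posSemidef_lapMatrix ℝ).isHermitian.mulVec_eigenvectorBasis, hμ0]
    simp
  have hbconst : ∀ j j', (⇑((G.posSemidef_lapMatrix ℝ).isHermitian.eigenvectorBasis
      (Tuple.sort (G.posSemidef_lapMatrix ℝ).isHermitian.eigenvalues 0))) j
      = (⇑((G.posSemidef_lapMatrix ℝ).isHermitian.eigenvectorBasis
      (Tuple.sort (G.posSemidef_lapMatrix ℝ).isHermitian.eigenvalues 0))) j' := by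
    have h := (G.lapMatrix_mulVec_eq_zero_iff_forall_reachable
      (x := ⇑((G.posSemidef_lapMatrix ℝ).isHermitian.eigenvectorBasis
        (Tuple.sort (G.posSemidef_lapMatrix ℝ).isHermitian.eigenvalues 0)))).mp
      hLb0
    intro j j'
    exact h j j' (hconn.preconnected j j')
  -- coefficient along i0 vanishes
  have hc0 : ⇑((G.posSemidef_lapMatrix ℝ).isHermitian.eigenvectorBasis
      (Tuple.sort (G.posSemidef_lapMatrix ℝ).isHermitian.eigenvalues 0)) ⬝ᵥ y = 0 := by
    obtain ⟨j0⟩ : Nonempty (Fin n) := ⟨⟨0, Nat.pos_of_ne_zero (NeZero.ne n)⟩⟩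
    have heq : ⇑((G.posSemidef_lapMatrix ℝ).isHermitian.eigenvectorBasis
        (Tuple.sort (G.posSemidef_lapMatrix ℝ).isHermitian.eigenvalues 0)) ⬝ᵥ y
        = (⇑((G.posSemidef_lapMatrix ℝ).isHermitian.eigenvectorBasis
        (Tuple.sort (G.posSemidef_lapMatrix ℝ).isHermitian.eigenvalues 0))) j0 * ∑ i, y i := by
      rw [dotProduct, Finset.mul_sum]
      refine Finset.sum_congr rfl fun i _ => ?_
      rw [hbconst i j0]
    rw [heq, hy, mul_zero]
  -- termwise comparison
  have hterm : ∀ i, lambda2 (G.posSemidef_lapMatrix ℝ).isHermitian *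
      ((⇑((G.posSemidef_lapMatrix ℝ).isHermitian.eigenvectorBasis i) ⬝ᵥ y) *
       (⇑((G.posSemidef_lapMatrix ℝ).isHermitian.eigenvectorBasis i) ⬝ᵥ y))
      ≤ (G.posSemidef_lapMatrix ℝ).isHermitian.eigenvalues i *
      ((⇑((G.posSemidef_lapMatrix ℝ).isHermitian.eigenvectorBasis i) ⬝ᵥ y) *
       (⇑((G.posSemidef_lapMatrix ℝ).isHermitian.eigenvectorBasis i) ⬝ᵥ y)) := by
    intro i
    by_cases hi : i = Tuple.sort (G.posSemidef_lapMatrix ℝ).isHermitian.eigenvalues 0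
    · rw [hi, hc0]
      simp
    · have hle : lambda2 (G.posSemidef_lapMatrix ℝ).isHermitian
          ≤ (G.posSemidef_lapMatrix ℝ).isHermitian.eigenvalues i := by
        have hj : (Tuple.sort (G.posSemidef_lapMatrix ℝ).isHermitian.eigenvalues).symm i ≠ 0 := by
          intro h
          apply hi
          rw [← Equiv.apply_symm_apply (Tuple.sort (G.posSemidef_lapMatrix ℝ).isHermitian.eigenvalues) i, h]
        have h1 : (1 : Fin n) ≤ (Tuple.sort (G.posSemidef_lapMatrix ℝ).isHermitian.eigenvalues).symm i := by
          have h0 : 0 < (Tuple.sort (G.posSemidef_lapMatrix ℝ).isHermitian.eigenvalues).symm i :=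
            (Fin.pos_iff_ne_zero' _).mpr hj
          rw [Fin.lt_def, Fin.val_zero] at h0
          rw [Fin.le_def, Fin.val_one']
          have := Nat.mod_le 1 n
          omega
        have h := Tuple.monotone_sort (G.posSemidef_lapMatrix ℝ).isHermitian.eigenvalues h1
        simpa [lambda2] using h
      exact mul_le_mul_of_nonneg_right hle (mul_self_nonneg _)
  calc lambda2 (G.posSemidef_lapMatrix ℝ).isHermitian * (∑ i, y i ^ 2)
      = lambda2 (G.posSemidef_lapMatrix ℝ).isHermitian * (y ⬝ᵥ y) := by
        congr 1
        simp [dotProduct, pow_two]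
    _ = ∑ i, lambda2 (G.posSemidef_lapMatrix ℝ).isHermitian *
        ((⇑((G.posSemidef_lapMatrix ℝ).isHermitian.eigenvectorBasis i) ⬝ᵥ y) *
         (⇑((G.posSemidef_lapMatrix ℝ).isHermitian.eigenvectorBasis i) ⬝ᵥ y)) := by
        rw [hpar y, Finset.mul_sum]
    _ ≤ _ := Finset.sum_le_sum fun i _ => hterm i
    _ = y ⬝ᵥ (G.lapMatrix ℝ *ᵥ y) := (hquad y).symm

end spec

section kron
variable {n r : ℕ} [NeZero n] (G : SimpleGraph (Fin n)) [DecidableRel G.Adj]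

omit [NeZero n] in
lemma lap_row_sum (i : Fin n) : ∑ j, G.lapMatrix ℝ i j = 0 := by
  have h := congrFun (G.lapMatrix_mulVec_const_eq_zero (R := ℝ)) i
  simpa [Matrix.mulVec, dotProduct] using h

omit [NeZero n] in
lemma lap_col_sum (j : Fin n) : ∑ i, G.lapMatrix ℝ i j = 0 := by
  have h : ∀ i, G.lapMatrix ℝ i j = G.lapMatrix ℝ j i := by
    intro i
    conv_lhs => rw [← (G.isSymm_lapMatrix (R := ℝ)).eq]
    rfl
  simp only [h]
  exact lap_row_sum G j

omit [NeZero n] in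
lemma lk_mulVec (z : Fin n × Fin r → ℝ) (p : Fin n × Fin r) :
    ((G.lapMatrix ℝ ⊗ₖ (1 : Matrix (Fin r) (Fin r) ℝ)) *ᵥ z) p
      = ∑ j, G.lapMatrix ℝ p.1 j * z (j, p.2) := by
  obtain ⟨i, s⟩ := p
  simp only [Matrix.mulVec, dotProduct, Fintype.sum_prod_type,
    Matrix.kroneckerMap_apply, Matrix.one_apply]
  refine Finset.sum_congr rfl fun j _ => ?_
  simp [mul_ite, ite_mul, mul_assoc]

omit [NeZero n] in
lemma lk_sum_zero (z : Fin n × Fin r → ℝ) (s : Fin r) :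
    ∑ i, ((G.lapMatrix ℝ ⊗ₖ (1 : Matrix (Fin r) (Fin r) ℝ)) *ᵥ z) (i, s) = 0 := by
  simp only [lk_mulVec]
  rw [Finset.sum_comm]
  refine Finset.sum_eq_zero fun j _ => ?_
  rw [← Finset.sum_mul, lap_col_sum, zero_mul]

omit [NeZero n] in
lemma kron_quad (z : Fin n × Fin r → ℝ) :
    z ⬝ᵥ ((G.lapMatrix ℝ ⊗ₖ (1 : Matrix (Fin r) (Fin r) ℝ)) *ᵥ z)
      = ∑ s : Fin r, (fun i => z (i, s)) ⬝ᵥ (G.lapMatrix ℝ *ᵥ fun i => z (i, s)) := by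
  rw [dotProduct]
  simp only [lk_mulVec]
  rw [Fintype.sum_prod_type, Finset.sum_comm]
  refine Finset.sum_congr rfl fun s _ => ?_
  simp [dotProduct, Matrix.mulVec]

end kron

set_option maxHeartbeats 1000000 in
/-- **Common inputs do not affect disagreement decay.** If
`Θ̇(t) = -γ (L ⊗ I_r) Θ(t) + 1ₙ ⊗ g(t)` with `g` continuous, then the disagreement
`δ(t) = (M ⊗ I_r) Θ(t)`, `M = Iₙ - (1/n) 1ₙ 1ₙᵀ`, satisfies
`‖δ(t)‖₂ ≤ ‖δ(t₀)‖₂ exp(-γ λ₂(L) (t - t₀))` for all `t ≥ t₀`. -/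
theorem statement_14 (n : ℕ) (hn : 2 ≤ n) [NeZero n]
    (G : SimpleGraph (Fin n)) [DecidableRel G.Adj] (hconn : G.Connected)
    (r : ℕ) (hr : 1 ≤ r) (t₀ : ℝ) (γ : ℝ) (hγ : 0 < γ)
    (g : ℝ → (Fin r → ℝ)) (hg : ContinuousOn g (Set.Ici t₀))
    (Θ : ℝ → (Fin n × Fin r → ℝ))
    (hΘ : ∀ t, t₀ ≤ t → HasDerivAt Θ
      (fun p => -γ * ((G.lapMatrix ℝ ⊗ₖ (1 : Matrix (Fin r) (Fin r) ℝ)).mulVec (Θ t)) p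
        + g t p.2) t)
    (δ : ℝ → (Fin n × Fin r → ℝ))
    (hδ : ∀ t p, δ t p = Θ t p - (n : ℝ)⁻¹ * ∑ i, Θ t (i, p.2)) :
    ∀ t, t₀ ≤ t →
      Real.sqrt (∑ p, (δ t p) ^ 2) ≤
        Real.sqrt (∑ p, (δ t₀ p) ^ 2) *
          Real.exp (-γ * lambda2 (G.posSemidef_lapMatrix ℝ).isHermitian * (t - t₀)) := by
  have hns : (n : ℝ) ≠ 0 := Nat.cast_ne_zero.mpr (NeZero.ne n)
  set Lk := G.lapMatrix ℝ ⊗ₖ (1 : Matrix (Fin r) (Fin r) ℝ) with hLk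
  set lam := lambda2 (G.posSemidef_lapMatrix ℝ).isHermitian with hlam
  -- zero-sum property of δ
  have hsum0 : ∀ t s, ∑ i, δ t (i, s) = 0 := by
    intro t s
    have h : ∑ i, δ t (i, s) = (∑ i, Θ t (i, s)) - (n : ℝ) * ((n:ℝ)⁻¹ * ∑ j, Θ t (j, s)) := by
      simp only [hδ]
      rw [Finset.sum_sub_distrib, Finset.sum_const, Finset.card_univ, Fintype.card_fin,
        nsmul_eq_mul]
    rw [h]
    rw [← mul_assoc, mul_inv_cancel₀ hns, one_mul, sub_self]
  -- (Lk *ᵥ δ t) = (Lk *ᵥ Θ t) pointwise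
  have hδΘ : ∀ t p, (Lk *ᵥ δ t) p = (Lk *ᵥ Θ t) p := by
    intro t p
    rw [hLk, lk_mulVec, lk_mulVec]
    simp only [hδ]
    rw [Finset.sum_congr rfl (fun j _ => mul_sub (G.lapMatrix ℝ p.1 j) _ _),
      Finset.sum_sub_distrib, ← Finset.sum_mul, lap_row_sum, zero_mul, sub_zero]
  -- derivative of coordinates of δ
  have hδd : ∀ t, t₀ ≤ t → ∀ p, HasDerivAt (fun u => δ u p) (-γ * (Lk *ᵥ δ t) p) t := by
    intro t ht p
    have hcoord := hasDerivAt_pi.mp (hΘ t ht)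
    have hD : HasDerivAt (fun u => Θ u p - (n:ℝ)⁻¹ * ∑ i, Θ u (i, p.2))
        ((-γ * (Lk *ᵥ Θ t) p + g t p.2)
          - (n:ℝ)⁻¹ * ∑ i : Fin n, (-γ * (Lk *ᵥ Θ t) (i, p.2) + g t (i, p.2).2)) t := by
      exact (hcoord p).sub
        ((HasDerivAt.fun_sum (fun i _ => hcoord (i, p.2))).const_mul ((n:ℝ)⁻¹))
    have heq : (fun u => δ u p) = fun u => Θ u p - (n:ℝ)⁻¹ * ∑ i, Θ u (i, p.2) := by
      funext u; exact hδ u p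
    rw [heq]
    convert hD using 1
    rw [hδΘ]
    rw [Finset.sum_add_distrib, ← Finset.mul_sum, lk_sum_zero]
    have hgs : ∑ x : Fin n, g t (x, p.2).2 = (n:ℝ) * g t p.2 := by
      simp [Finset.card_univ, mul_comm]
    rw [hgs]
    field_simp
    ring
  -- energy function and its derivative
  set N : ℝ → ℝ := fun u => ∑ p, δ u p ^ 2 with hN
  have hNd : ∀ t, t₀ ≤ t →
      HasDerivAt N (-(2*γ) * (δ t ⬝ᵥ (Lk *ᵥ δ t))) t := by
    intro t ht
    have h := HasDerivAt.fun_sum (u := Finset.univ)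
      (A := fun p u => δ u p ^ 2)
      (A' := fun p => 2 * δ t p ^ 1 * (-γ * (Lk *ᵥ δ t) p))
      (fun p _ => by
        have := (hδd t ht p).fun_pow 2
        simpa using this)
    convert h using 1
    · rfl
    · rfl
    rw [dotProduct, Finset.mul_sum]
    exact Finset.sum_congr rfl fun p _ => by ring
  -- quadratic form bound
  have hquad : ∀ t, lam * N t ≤ δ t ⬝ᵥ (Lk *ᵥ δ t) := by
    intro t
    rw [hLk, kron_quad]
    have hNsplit : N t = ∑ s : Fin r, ∑ i : Fin n, δ t (i, s) ^ 2 := by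
      show (∑ p : Fin n × Fin r, δ t p ^ 2) = _
      rw [Fintype.sum_prod_type, Finset.sum_comm]
    rw [hNsplit, Finset.mul_sum]
    refine Finset.sum_le_sum fun s _ => ?_
    exact lambda2_le_quad G hconn (fun i => δ t (i, s)) (hsum0 t s)
  -- the auxiliary function F
  set F : ℝ → ℝ := fun u => N u * Real.exp (2*γ*lam*(u - t₀)) with hF
  have hFd : ∀ t, t₀ ≤ t → HasDerivAt F
      (-(2*γ) * (δ t ⬝ᵥ (Lk *ᵥ δ t)) * Real.exp (2*γ*lam*(t - t₀))
        + N t * (Real.exp (2*γ*lam*(t - t₀)) * (2*γ*lam))) t := by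
    intro t ht
    have hE : HasDerivAt (fun u => Real.exp (2*γ*lam*(u - t₀)))
        (Real.exp (2*γ*lam*(t - t₀)) * (2*γ*lam)) t := by
      have h1 : HasDerivAt (fun u : ℝ => 2*γ*lam*(u - t₀)) (2*γ*lam) t := by
        simpa using ((hasDerivAt_id t).sub_const t₀).const_mul (2*γ*lam)
      simpa using h1.exp
    exact (hNd t ht).mul hE
  have hanti : AntitoneOn F (Set.Ici t₀) := by
    apply antitoneOn_of_deriv_nonpos (convex_Ici t₀)
    · intro x hx
      exact ((hFd x hx).continuousAt).continuousWithinAt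
    · intro x hx
      rw [interior_Ici] at hx
      exact (hFd x (le_of_lt hx)).differentiableAt.differentiableWithinAt
    · intro x hx
      rw [interior_Ici] at hx
      rw [(hFd x (le_of_lt hx)).deriv]
      have hq := hquad x
      have hE := Real.exp_pos (2*γ*lam*(x - t₀))
      nlinarith [hE.le, mul_le_mul_of_nonneg_right
        (mul_le_mul_of_nonneg_left hq (by linarith : (0:ℝ) ≤ 2*γ)) hE.le]
    done
  intro t ht
  have hFle : F t ≤ F t₀ := hanti (Set.self_mem_Ici) ht ht
  have hFt₀ : F t₀ = N t₀ := by
    rw [hF]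
    simp
  have hNt : N t ≤ N t₀ * Real.exp (-(2*γ*lam*(t - t₀))) := by
    have hE := Real.exp_pos (2*γ*lam*(t - t₀))
    rw [Real.exp_neg, ← div_eq_mul_inv, le_div_iff₀ hE]
    calc N t * Real.exp (2*γ*lam*(t - t₀)) = F t := rfl
      _ ≤ F t₀ := hFle
      _ = N t₀ := hFt₀
  have hsq : Real.sqrt (N t) ≤ Real.sqrt (N t₀ * Real.exp (-(2*γ*lam*(t - t₀)))) :=
    Real.sqrt_le_sqrt hNt
  have hN₀ : 0 ≤ N t₀ := Finset.sum_nonneg fun p _ => sq_nonneg _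
  rw [Real.sqrt_mul hN₀] at hsq
  have hexp : Real.sqrt (Real.exp (-(2*γ*lam*(t - t₀))))
      = Real.exp (-γ * lam * (t - t₀)) := by
    rw [show -(2*γ*lam*(t - t₀)) = (-γ*lam*(t-t₀)) + (-γ*lam*(t-t₀)) by ring,
      Real.exp_add, Real.sqrt_mul_self (Real.exp_nonneg _)]
  rw [hexp] at hsq
  exact hsq
end
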